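/- arXiv:2201.05582 — 3 statements merged into one kernel-verified Lean document; each statement's English description precedes it below -/
import Mathlib

section
/- Let μ satisfy Assumption 1, let t > 1, and let E ∈ ℝ \ supp(μ) be a zero of m_μ. Then there exists a constant M > 0 such that |ω_t(z) − E| ≥ M for every z ∈ ℝ (where ω_t denotes the continuous extension of the subordination function to the real line). -/
open MeasureTheory Topology Filter Set

noncomputable section

/-- The open upper half-plane ℂ⁺. -/
def UHP : Set ℂ := {z : ℂ | 0 < z.im}

/-- The closed upper half-plane ℂ⁺ ∪ ℝ. -/
def CUHP : Set ℂ := {z : ℂ | 0 ≤ z.im}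

/-- Cauchy–Stieltjes transform `m_μ(z) = ∫ 1/(x−z) dμ(x)`. -/
def stT (μ : Measure ℝ) (z : ℂ) : ℂ := ∫ x, ((x : ℂ) - z)⁻¹ ∂μ

/-- Real-valued Cauchy–Stieltjes transform at real points (outside the support). -/
def stTR (μ : Measure ℝ) (E : ℝ) : ℝ := ∫ x, (x - E)⁻¹ ∂μ

/-- Negative reciprocal Cauchy–Stieltjes transform `F_μ = −1/m_μ`. -/
def nrT (μ : Measure ℝ) (z : ℂ) : ℂ := -(stT μ z)⁻¹

/-- Support of a Borel measure on ℝ (the smallest closed set of full measure). -/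
def msupp (μ : Measure ℝ) : Set ℝ := {x : ℝ | ∀ ε > 0, 0 < μ (Set.Ioo (x - ε) (x + ε))}

/-- Absolutely continuous part of μ with respect to Lebesgue measure. -/
def acPart (μ : Measure ℝ) : Measure ℝ := volume.withDensity (μ.rnDeriv volume)

/-- `I_μ(ω) = ∫ 1/|x−ω|² dμ(x)`. -/
def Ifun (μ : Measure ℝ) (w : ℂ) : ℝ := ∫ x, (Complex.normSq ((x : ℂ) - w))⁻¹ ∂μ

/-- A sequence of the upper half-plane converging non-tangentially to `E ∈ ℝ`. -/
def NonTangentialSeq (z : ℕ → ℂ) (E : ℝ) : Prop :=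
  (∀ n, z n ∈ UHP) ∧ Tendsto z atTop (𝓝 (E : ℂ)) ∧
    ∃ C : ℝ, ∀ n, |(z n).re - E| ≤ C * (z n).im

/-- The density `ρ_μ` of the a.c. part of `μ` vanishes at `x`
(via the Stieltjes inversion formula). -/
def densityVanishesAt (μ : Measure ℝ) (x : ℝ) : Prop :=
  Tendsto (fun η : ℝ => (stT μ ((x : ℂ) + (η : ℂ) * Complex.I)).im) (𝓝[>] 0) (𝓝 0)

/-- The density `ρ_μ` of the a.c. part of `μ` diverges at `x`. -/
def densityDivergesAt (μ : Measure ℝ) (x : ℝ) : Prop :=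
  Tendsto (fun η : ℝ => (stT μ ((x : ℂ) + (η : ℂ) * Complex.I)).im) (𝓝[>] 0) atTop

/-- Assumption 1. -/
structure Assumption1 (μ : Measure ℝ) (nac npp nppout : ℕ)
    (Em Ep : Fin nac → ℝ) (atom : Fin npp → ℝ) (ρ : ℝ → ℝ) : Prop where
  prob : IsProbabilityMeasure μ
  compact : IsCompact (msupp μ)
  nac_pos : 1 ≤ nac
  npp_pos : 1 ≤ npp
  ρ_nonneg : ∀ x, 0 ≤ ρ x
  ac_density : acPart μ = volume.withDensity fun x => ENNReal.ofReal (ρ x)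
  sing_atomic : μ.singularPart volume = ∑ j : Fin npp, μ {atom j} • Measure.dirac (atom j)
  atom_inj : Function.Injective atom
  atom_pos : ∀ j, 0 < μ {atom j}
  lt : ∀ j, Em j < Ep j
  ordered : ∀ i j : Fin nac, i < j → Ep i < Em j
  supp_ac : msupp (acPart μ) = ⋃ j, Set.Icc (Em j) (Ep j)
  out_card : Nat.card {j : Fin npp // atom j ∉ msupp (acPart μ)} = nppout
  no_atom_endpoint : ∀ j i, atom j ≠ Em i ∧ atom j ≠ Ep i
  power_law : ∀ j, ∃ tm tp C : ℝ, -1 < tm ∧ tm < 1 ∧ -1 < tp ∧ tp < 1 ∧ 1 ≤ C ∧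
    ∀ᵐ x ∂volume, x ∈ Set.Icc (Em j) (Ep j) →
      C⁻¹ < ρ x / ((x - Em j) ^ tm * (Ep j - x) ^ tp) ∧
      ρ x / ((x - Em j) ^ tm * (Ep j - x) ^ tp) < C

/-- The subordination function `ω_t` for the free convolution semi-group,
together with its continuous extension to `ℂ⁺ ∪ ℝ`. -/
structure IsSubordT (μ : Measure ℝ) (t : ℝ) (ω : ℂ → ℂ) : Prop where
  diff : DifferentiableOn ℂ ω UHP
  maps : ∀ z ∈ UHP, ω z ∈ UHP
  imLe : ∀ z ∈ UHP, z.im ≤ (ω z).im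
  limTop : Tendsto (fun η : ℝ => ω ((η : ℂ) * Complex.I) / ((η : ℂ) * Complex.I))
      atTop (𝓝 1)
  eqn : ∀ z ∈ UHP, (t : ℂ) * ω z - z = ((t : ℂ) - 1) * nrT μ (ω z)
  cont : ContinuousOn ω CUHP

/-- `μt = μ^{⊞ t}`: the probability measure whose negative reciprocal Cauchy–Stieltjes
transform is `F_μ ∘ ω_t`, i.e. whose Cauchy–Stieltjes transform is `m_μ ∘ ω_t`. -/
def IsFreePow (μ : Measure ℝ) (ω : ℂ → ℂ) (μt : Measure ℝ) : Prop :=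
  IsProbabilityMeasure μt ∧ ∀ z ∈ UHP, stT μt z = stT μ (ω z)

/-- Assumption 2 (for one of the two measures). -/
structure Assumption2 (μ : Measure ℝ) (n : ℕ) (Am Ap : Fin n → ℝ) (ρ : ℝ → ℝ) : Prop where
  prob : IsProbabilityMeasure μ
  n_pos : 1 ≤ n
  centered : ∫ x, x ∂μ = 0
  ρ_nonneg : ∀ x, 0 ≤ ρ x
  ac : μ = volume.withDensity fun x => ENNReal.ofReal (ρ x)
  lt : ∀ j, Am j < Ap j
  ordered : ∀ i j : Fin n, i < j → Ap i < Am j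
  supp_eq : msupp μ = ⋃ j, Set.Icc (Am j) (Ap j)
  power_law : ∀ j, ∃ sm sp C : ℝ, -1 < sm ∧ sm < 1 ∧ -1 < sp ∧ sp < 1 ∧ 1 ≤ C ∧
    ∀ᵐ x ∂volume, x ∈ Set.Icc (Am j) (Ap j) →
      C⁻¹ < ρ x / ((x - Am j) ^ sm * (Ap j - x) ^ sp) ∧
      ρ x / ((x - Am j) ^ sm * (Ap j - x) ^ sp) < C

/-- The pair of subordination functions for the free additive convolution `μa ⊞ μb`. -/
structure IsSubordPair (μa μb : Measure ℝ) (ωa ωb : ℂ → ℂ) : Prop where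
  diff_a : DifferentiableOn ℂ ωa UHP
  diff_b : DifferentiableOn ℂ ωb UHP
  maps_a : ∀ z ∈ UHP, ωa z ∈ UHP
  maps_b : ∀ z ∈ UHP, ωb z ∈ UHP
  imLe_a : ∀ z ∈ UHP, z.im ≤ (ωa z).im
  imLe_b : ∀ z ∈ UHP, z.im ≤ (ωb z).im
  lim_a : Tendsto (fun η : ℝ => ωa ((η : ℂ) * Complex.I) / ((η : ℂ) * Complex.I))
      atTop (𝓝 1)
  lim_b : Tendsto (fun η : ℝ => ωb ((η : ℂ) * Complex.I) / ((η : ℂ) * Complex.I))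
      atTop (𝓝 1)
  eqn_a : ∀ z ∈ UHP, ωa z + ωb z - z = nrT μa (ωb z)
  eqn_b : ∀ z ∈ UHP, ωa z + ωb z - z = nrT μb (ωa z)

/-- `μab = μa ⊞ μb`: the probability measure whose negative reciprocal Cauchy–Stieltjes
transform is `F_{μa} ∘ ω_b`, i.e. whose Cauchy–Stieltjes transform is `m_{μa} ∘ ω_b`. -/
def IsFreeConv (μa μb : Measure ℝ) (ωb : ℂ → ℂ) (μab : Measure ℝ) : Prop :=
  IsProbabilityMeasure μab ∧ ∀ z ∈ UHP, stT μab z = stT μa (ωb z)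

/-- `Ω` is the continuous extension of `ω` to `ℂ⁺ ∪ ℝ`, with values in the
Riemann sphere `ℂ ∪ {∞}`. -/
def ExtendsToRP (ω : ℂ → ℂ) (Ω : ℂ → OnePoint ℂ) : Prop :=
  ContinuousOn Ω CUHP ∧ ∀ z ∈ UHP, Ω z = (ω z : OnePoint ℂ)

/-- `μhat` is the measure in the Nevanlinna representation
`F_μ(ω) − ω = −∫ x dμ + ∫ 1/(x−ω) dμ̂(x)`. -/
def IsNevanHat (μ μhat : Measure ℝ) : Prop :=
  IsFiniteMeasure μhat ∧ ∀ z ∈ UHP,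
    nrT μ z - z = -((∫ x, x ∂μ : ℝ) : ℂ) + ∫ x, ((x : ℂ) - z)⁻¹ ∂μhat

end

set_option maxHeartbeats 1000000 in
/-- The subordination function `ω_t` stays at positive distance from
every zero of `m_μ` lying outside the support of `μ`. -/
theorem subordination_away_from_zeros
    (μ : Measure ℝ) (nac npp nppout : ℕ)
    (Em Ep : Fin nac → ℝ) (atom : Fin npp → ℝ) (ρ : ℝ → ℝ)
    (hμ : Assumption1 μ nac npp nppout Em Ep atom ρ)
    (t : ℝ) (ht : 1 < t) (ω : ℂ → ℂ) (hω : IsSubordT μ t ω)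
    (E : ℝ) (hE₁ : E ∉ msupp μ) (hE₂ : stTR μ E = 0) :
    ∃ M : ℝ, 0 < M ∧ ∀ x : ℝ, M ≤ ‖ω (x : ℂ) - (E : ℂ)‖ := by
  haveI hprob : IsProbabilityMeasure μ := hμ.prob
  -- a measure-zero neighborhood of E
  have hE₁' : ¬ ∀ ε > 0, 0 < μ (Set.Ioo (E - ε) (E + ε)) := hE₁
  push_neg at hE₁'
  obtain ⟨ε, hε, hμε⟩ := hE₁'
  replace hμε : μ (Set.Ioo (E - ε) (E + ε)) = 0 := le_antisymm hμε (by simp)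
  -- μ is concentrated on its support
  have hU : μ (msupp μ)ᶜ = 0 := by
    apply measure_null_of_locally_null
    intro x hx
    have hx' : ¬ ∀ e > 0, 0 < μ (Set.Ioo (x - e) (x + e)) := hx
    push_neg at hx'
    obtain ⟨e, he, hme⟩ := hx'
    exact ⟨Set.Ioo (x - e) (x + e),
      mem_nhdsWithin_of_mem_nhds (Ioo_mem_nhds (by linarith) (by linarith)),
      le_antisymm hme (by simp)⟩
  -- a radius bound for the support
  obtain ⟨R, hR⟩ : ∃ R : ℝ, ∀ y ∈ msupp μ, ‖y‖ ≤ R :=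
    isBounded_iff_forall_norm_le.mp hμ.compact.isBounded
  set K : ℝ := max (R + |E|) ε with hK_def
  have hKpos : 0 < K := lt_of_lt_of_le hε (le_max_right _ _)
  have hεK : ε ≤ K := le_max_right _ _
  -- a.e. bounds on |x - E|
  have hsupp_ae : ∀ᵐ x ∂μ, x ∈ msupp μ := by
    rw [ae_iff]
    exact hU
  have hIoo_ae : ∀ᵐ x ∂μ, x ∉ Set.Ioo (E - ε) (E + ε) := by
    rw [ae_iff]
    convert hμε using 2
    ext a
    simp
  have hae : ∀ᵐ x ∂μ, ε ≤ |x - E| ∧ |x - E| ≤ K := by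
    filter_upwards [hsupp_ae, hIoo_ae] with x h1 h2
    constructor
    · rw [Set.mem_Ioo, not_and_or] at h2
      push_neg at h2
      rcases h2 with h2 | h2
      · exact le_abs.mpr (Or.inr (by linarith))
      · exact le_abs.mpr (Or.inl (by linarith))
    · have hx : |x| ≤ R := hR x h1
      calc |x - E| ≤ |x| + |E| := abs_sub _ _
        _ ≤ R + |E| := by linarith
        _ ≤ K := le_max_left _ _
  -- constants
  set c₁ : ℝ := (t - 1) / (t * (4 * K ^ 2)) with hc₁_def
  have hc₁ : 0 < c₁ := by
    apply div_pos (by linarith)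
    positivity
  set s : ℝ := min 1 c₁ with hs_def
  have hs0 : 0 < s := lt_min one_pos hc₁
  have hs1 : s ≤ 1 := min_le_left _ _
  have hsc : s ≤ c₁ := min_le_right _ _
  set δ : ℝ := min (ε / 2) (ε ^ 2 * s / 4) with hδ_def
  have hδ0 : 0 < δ := lt_min (by linarith) (by positivity)
  have hδε : δ ≤ ε / 2 := min_le_left _ _
  -- the key estimate in the open upper half-plane
  have key : ∀ z ∈ UHP, ¬ (‖ω z - (E : ℂ)‖ < δ) := by
    intro z hz habs
    set w : ℂ := ω z with hw_def
    have hwUHP : w ∈ UHP := hω.maps z hz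
    have hv : 0 < w.im := hwUHP
    have hzim : 0 < z.im := hz
    -- integrability of x ↦ 1/(x - w)
    have hmeasg : Measurable fun x : ℝ => ((x : ℂ) - w)⁻¹ :=
      (Complex.measurable_ofReal.sub measurable_const).inv
    have hgbound : ∀ x : ℝ, ‖((x : ℂ) - w)⁻¹‖ ≤ (w.im)⁻¹ := by
      intro x
      rw [norm_inv]
      apply inv_anti₀ hv
      calc w.im = |((x : ℂ) - w).im| := by
            simp [Complex.sub_im, abs_of_nonpos, hv.le]
        _ ≤ ‖(x : ℂ) - w‖ := Complex.abs_im_le_norm _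
    have hgint : Integrable (fun x : ℝ => ((x : ℂ) - w)⁻¹) μ := by
      apply Integrable.mono' (integrable_const (w.im)⁻¹) hmeasg.aestronglyMeasurable
      exact Eventually.of_forall hgbound
    -- integrability of x ↦ 1/(x - E) and its integral is 0
    have hmeash : Measurable fun x : ℝ => ((x : ℂ) - (E : ℂ))⁻¹ :=
      (Complex.measurable_ofReal.sub measurable_const).inv
    have hhint : Integrable (fun x : ℝ => ((x : ℂ) - (E : ℂ))⁻¹) μ := by
      apply Integrable.mono' (integrable_const ε⁻¹) hmeash.aestronglyMeasurable
      filter_upwards [hae] with x hx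
      rw [norm_inv]
      apply inv_anti₀ hε
      calc ε ≤ |x - E| := hx.1
        _ = ‖(x : ℂ) - (E : ℂ)‖ := by
            rw [← Complex.ofReal_sub, Complex.norm_real, Real.norm_eq_abs]
    have hrint : Integrable (fun x : ℝ => (x - E)⁻¹) μ := by
      apply Integrable.mono' (integrable_const ε⁻¹)
        ((measurable_id.sub_const E).inv).aestronglyMeasurable
      filter_upwards [hae] with x hx
      rw [Real.norm_eq_abs]
      show |(x - E)⁻¹| ≤ ε⁻¹
      rw [abs_inv]
      exact inv_anti₀ hε hx.1
    have hh0 : ∫ x : ℝ, ((x : ℂ) - (E : ℂ))⁻¹ ∂μ = 0 := by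
      have hcast : ∀ x : ℝ, ((x : ℂ) - (E : ℂ))⁻¹ = (((x - E)⁻¹ : ℝ) : ℂ) := by
        intro x; push_cast; ring
      simp_rw [hcast]
      have hcc := ContinuousLinearMap.integral_comp_comm Complex.ofRealCLM hrint
      simp only [Complex.ofRealCLM_apply] at hcc
      rw [hcc]
      have h0 : ∫ x : ℝ, (x - E)⁻¹ ∂μ = 0 := hE₂
      rw [h0, Complex.ofReal_zero]
    set m : ℂ := stT μ w with hm_def
    -- |m| is small
    have hsub : m = ∫ x : ℝ, (((x : ℂ) - w)⁻¹ - ((x : ℂ) - (E : ℂ))⁻¹) ∂μ := by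
      rw [hm_def]
      show (∫ x : ℝ, ((x : ℂ) - w)⁻¹ ∂μ) = _
      rw [integral_sub hgint hhint, hh0, sub_zero]
    have hmabs : ‖m‖ ≤ 2 * δ / ε ^ 2 := by
      rw [hsub]
      have hb : ∀ᵐ x : ℝ ∂μ, ‖((x : ℂ) - w)⁻¹ - ((x : ℂ) - (E : ℂ))⁻¹‖ ≤ 2 * δ / ε ^ 2 := by
        filter_upwards [hae] with x hx
        have hxE : (ε : ℝ) ≤ ‖(x : ℂ) - (E : ℂ)‖ := by
          rw [← Complex.ofReal_sub, Complex.norm_real, Real.norm_eq_abs]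
          exact hx.1
        have hxw : ε / 2 ≤ ‖(x : ℂ) - w‖ := by
          have htri : ‖(x : ℂ) - (E : ℂ)‖ ≤
              ‖(x : ℂ) - w‖ + ‖w - (E : ℂ)‖ := by
            have h1 : (x : ℂ) - (E : ℂ) = ((x : ℂ) - w) + (w - (E : ℂ)) := by ring
            rw [h1]; exact norm_add_le _ _
          have : ‖w - (E : ℂ)‖ < δ := habs
          linarith
        have hne1 : (x : ℂ) - w ≠ 0 := by
          intro h0
          rw [h0] at hxw
          simp at hxw
          linarith
        have hne2 : (x : ℂ) - (E : ℂ) ≠ 0 := by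
          intro h0
          rw [h0] at hxE
          simp at hxE
          linarith
        have hid : ((x : ℂ) - w)⁻¹ - ((x : ℂ) - (E : ℂ))⁻¹ =
            (w - (E : ℂ)) * (((x : ℂ) - w)⁻¹ * ((x : ℂ) - (E : ℂ))⁻¹) := by
          field_simp
          ring
        rw [hid]
        rw [norm_mul, norm_mul, norm_inv, norm_inv]
        have h1 : ‖w - (E : ℂ)‖ ≤ δ := le_of_lt habs
        have h2 : ‖(x : ℂ) - w‖⁻¹ ≤ (ε / 2)⁻¹ := inv_anti₀ (by linarith) hxw
        have h3 : ‖(x : ℂ) - (E : ℂ)‖⁻¹ ≤ ε⁻¹ := inv_anti₀ hε hxE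
        calc ‖w - (E : ℂ)‖ * (‖(x : ℂ) - w‖⁻¹ * ‖(x : ℂ) - (E : ℂ)‖⁻¹)
            ≤ δ * ((ε / 2)⁻¹ * ε⁻¹) := by
              apply mul_le_mul h1 _ (by positivity) hδ0.le
              apply mul_le_mul h2 h3 (by positivity) (by positivity)
          _ = 2 * δ / ε ^ 2 := by
              field_simp
      have := norm_integral_le_of_norm_le_const hb
      simpa [measure_univ] using this
    -- lower bound on Im m
    have himpt : ∀ x : ℝ, (((x : ℂ) - w)⁻¹).im = w.im / Complex.normSq ((x : ℂ) - w) := by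
      intro x
      rw [Complex.inv_im, Complex.sub_im, Complex.ofReal_im]
      ring
    have hmim_eq : m.im = ∫ x : ℝ, w.im / Complex.normSq ((x : ℂ) - w) ∂μ := by
      have h1 := ContinuousLinearMap.integral_comp_comm Complex.imCLM hgint
      simp only [Complex.imCLM_apply] at h1
      rw [hm_def]
      show (∫ x : ℝ, ((x : ℂ) - w)⁻¹ ∂μ).im = _
      rw [← h1]
      congr 1
      ext x
      exact himpt x
    have hmim : w.im / (4 * K ^ 2) ≤ m.im := by
      rw [hmim_eq]
      have hint2 : Integrable (fun x : ℝ => w.im / Complex.normSq ((x : ℂ) - w)) μ := by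
        have h2 : (fun x : ℝ => w.im / Complex.normSq ((x : ℂ) - w)) =
            fun x : ℝ => (((x : ℂ) - w)⁻¹).im := by
          ext x
          rw [himpt x]
        rw [h2]
        exact hgint.im
      have hconst : (∫ _ : ℝ, w.im / (4 * K ^ 2) ∂μ) = w.im / (4 * K ^ 2) := by
        simp [measure_univ]
      rw [← hconst]
      apply integral_mono_ae (integrable_const _) hint2
      filter_upwards [hae] with x hx
      have hxw2 : ‖(x : ℂ) - w‖ ≤ 2 * K := by
        have htri : ‖(x : ℂ) - w‖ ≤
            ‖(x : ℂ) - (E : ℂ)‖ + ‖(E : ℂ) - w‖ := by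
          have h1 : (x : ℂ) - w = ((x : ℂ) - (E : ℂ)) + ((E : ℂ) - w) := by ring
          rw [h1]; exact norm_add_le _ _
        have h2 : ‖(x : ℂ) - (E : ℂ)‖ ≤ K := by
          rw [← Complex.ofReal_sub, Complex.norm_real, Real.norm_eq_abs]; exact hx.2
        have h3 : ‖(E : ℂ) - w‖ < δ := by
          rw [norm_sub_rev]
          exact habs
        have : δ ≤ K := by linarith
        linarith
      have hns : Complex.normSq ((x : ℂ) - w) ≤ 4 * K ^ 2 := by
        rw [Complex.normSq_eq_norm_sq]
        calc ‖(x : ℂ) - w‖ ^ 2 ≤ (2 * K) ^ 2 := by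
              apply pow_le_pow_left₀ (norm_nonneg _) hxw2
          _ = 4 * K ^ 2 := by ring
      have hns0 : 0 < Complex.normSq ((x : ℂ) - w) := by
        rw [Complex.normSq_pos]
        intro h0
        have := congrArg Complex.im h0
        simp [Complex.sub_im] at this
        linarith
      exact div_le_div_of_nonneg_left hv.le hns0 hns
    -- conclude
    have hmne : m ≠ 0 := by
      intro h0
      rw [h0] at hmim
      simp only [Complex.zero_im] at hmim
      have hp : 0 < w.im / (4 * K ^ 2) := by positivity
      linarith
    have hN0 : 0 < Complex.normSq m := Complex.normSq_pos.mpr hmne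
    -- Im of the subordination equation
    have heqn := hω.eqn z hz
    have hC : (t * w.im - z.im) * Complex.normSq m = (t - 1) * m.im := by
      have h0 := congrArg Complex.im heqn
      simp only [nrT] at h0
      rw [← hw_def, ← hm_def] at h0
      have hL : ((t : ℂ) * w - z).im = t * w.im - z.im := by
        simp [Complex.sub_im, Complex.mul_im]
      have hR : (((t : ℂ) - 1) * -(m)⁻¹).im = (t - 1) * (m.im / Complex.normSq m) := by
        simp only [Complex.mul_im, Complex.sub_re, Complex.sub_im, Complex.inv_im,
          Complex.inv_re, Complex.neg_re, Complex.neg_im, Complex.ofReal_re,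
          Complex.ofReal_im, Complex.one_re, Complex.one_im]
        ring
      rw [hL, hR] at h0
      rw [h0]
      field_simp
    have hB' : w.im ≤ m.im * (4 * K ^ 2) := (div_le_iff₀ (by positivity)).mp hmim
    -- normSq m > c₁
    have hgt : c₁ < Complex.normSq m := by
      rw [hc₁_def, div_lt_iff₀ (by positivity)]
      have h4K : (0 : ℝ) < 4 * K ^ 2 := by positivity
      have e1 : (t - 1) * w.im ≤ (t - 1) * (m.im * (4 * K ^ 2)) :=
        mul_le_mul_of_nonneg_left hB' (by linarith)
      have e2 : ((t * w.im - z.im) * Complex.normSq m) * (4 * K ^ 2) =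
          (t - 1) * m.im * (4 * K ^ 2) := by rw [hC]
      nlinarith [e1, e2, mul_pos hzim (mul_pos hN0 h4K), mul_pos hv hN0]
    -- normSq m ≤ c₁ / 4
    have hle : Complex.normSq m ≤ c₁ / 4 := by
      have h1 : ‖m‖ ≤ s / 2 := by
        have hδ2 : δ ≤ ε ^ 2 * s / 4 := min_le_right _ _
        calc ‖m‖ ≤ 2 * δ / ε ^ 2 := hmabs
          _ ≤ 2 * (ε ^ 2 * s / 4) / ε ^ 2 := by
              apply div_le_div_of_nonneg_right _ (by positivity)
              linarith
          _ = s / 2 := by field_simp; ring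
      have h2 : Complex.normSq m ≤ (s / 2) ^ 2 := by
        rw [Complex.normSq_eq_norm_sq]
        apply pow_le_pow_left₀ (norm_nonneg _) h1
      have h3 : (s / 2) ^ 2 ≤ s / 4 := by nlinarith
      linarith [hsc]
    linarith
  -- pass to the boundary
  refine ⟨δ / 2, by positivity, fun x => ?_⟩
  by_contra hlt
  push_neg at hlt
  have hxC : (x : ℂ) ∈ CUHP := by simp [CUHP]
  have hcont : Tendsto ω (𝓝[CUHP] (x : ℂ)) (𝓝 (ω (x : ℂ))) := (hω.cont (x : ℂ) hxC).tendsto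
  set zn : ℕ → ℂ := fun n => (x : ℂ) + (((n : ℝ) + 1)⁻¹ : ℝ) * Complex.I with hzn_def
  have hz1 : Tendsto zn atTop (𝓝 (x : ℂ)) := by
    have h1 : Tendsto (fun n : ℕ => ((n : ℝ) + 1)⁻¹) atTop (𝓝 0) := by
      simpa [one_div] using tendsto_one_div_add_atTop_nhds_zero_nat (𝕜 := ℝ)
    have h2 : Tendsto (fun n : ℕ => ((((n : ℝ) + 1)⁻¹ : ℝ) : ℂ)) atTop (𝓝 ((0 : ℝ) : ℂ)) :=
      (Complex.continuous_ofReal.tendsto 0).comp h1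
    rw [hzn_def]
    have h3 := (h2.mul_const Complex.I).const_add (x : ℂ)
    simpa using h3
  have hz2 : Tendsto zn atTop (𝓝[CUHP] (x : ℂ)) := by
    apply tendsto_nhdsWithin_of_tendsto_nhds_of_eventually_within _ hz1
    apply Eventually.of_forall
    intro n
    show 0 ≤ (zn n).im
    simp only [hzn_def, Complex.add_im, Complex.mul_im, Complex.ofReal_re, Complex.ofReal_im,
      Complex.I_re, Complex.I_im]
    positivity
  have h4 : Tendsto (fun n => ‖ω (zn n) - (E : ℂ)‖) atTop
      (𝓝 (‖ω (x : ℂ) - (E : ℂ)‖)) := by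
    have := hcont.comp hz2
    exact (continuous_norm.tendsto _).comp (this.sub_const (E : ℂ))
  have h5 : ∀ᶠ n in atTop, ‖ω (zn n) - (E : ℂ)‖ < δ := by
    apply h4.eventually_lt_const
    calc ‖ω (x : ℂ) - (E : ℂ)‖ < δ / 2 := hlt
      _ < δ := by linarith
  obtain ⟨n, hn⟩ := h5.exists
  have hznUHP : zn n ∈ UHP := by
    show 0 < (zn n).im
    simp only [hzn_def, Complex.add_im, Complex.mul_im, Complex.ofReal_re, Complex.ofReal_im,
      Complex.I_re, Complex.I_im]
    positivity
  exact key (zn n) hznUHP hn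
end

section
/- Let μ satisfy Assumption 1 and let t > 1. Then: (i) Re ω_t'(z) ≥ 1/2 for every z ∈ ℂ⁺; (ii) the function E ↦ Re ω_t(E) is strictly increasing on ℝ; (iii) ω_t is a homeomorphism from ℂ⁺ ∪ ℝ onto its image; (iv) ω_t restricted to (ℂ⁺ ∪ ℝ) \ supp(μ^{⊞t}) is biholomorphic onto its image (it extends analytically through every real point outside supp(μ^{⊞t}) and is injective there). -/
open MeasureTheory Topology Filter Set

namespace SubAux

set_option linter.unusedSectionVars false
set_option linter.unusedVariables false
set_option linter.deprecated false

open Metric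

section Basic
variable {ν : Measure ℝ} [IsFiniteMeasure ν] {z : ℂ} {δ : ℝ}

lemma isOpen_UHP : IsOpen UHP := isOpen_lt continuous_const Complex.continuous_im

lemma convex_UHP : Convex ℝ UHP := convex_halfSpace_im_gt 0

lemma isPreconnected_UHP : IsPreconnected UHP := convex_UHP.isPreconnected

variable {ν : Measure ℝ} [IsFiniteMeasure ν] {z : ℂ} {δ : ℝ}

lemma meas_inv (z : ℂ) : AEStronglyMeasurable (fun x : ℝ => ((x : ℂ) - z)⁻¹) ν :=
  (((Complex.measurable_ofReal).sub_const z).inv).aestronglyMeasurable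

lemma meas_sqinv (z : ℂ) : AEStronglyMeasurable (fun x : ℝ => (((x : ℂ) - z) ^ 2)⁻¹) ν :=
  ((((Complex.measurable_ofReal).sub_const z).pow_const 2).inv).aestronglyMeasurable

lemma meas_nsqinv (z : ℂ) :
    AEStronglyMeasurable (fun x : ℝ => (Complex.normSq ((x : ℂ) - z))⁻¹) ν :=
  ((Complex.continuous_normSq.measurable.comp
    ((Complex.measurable_ofReal).sub_const z)).inv).aestronglyMeasurable

lemma normSq_eq_sq (u : ℂ) : Complex.normSq u = ‖u‖ ^ 2 := by
  rw [← Complex.sq_norm]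

lemma integrable_inv (hδ : 0 < δ) (h : ∀ᵐ (x : ℝ) ∂ν, δ ≤ ‖(x : ℂ) - z‖) :
    Integrable (fun x : ℝ => ((x : ℂ) - z)⁻¹) ν := by
  refine Integrable.mono' (integrable_const δ⁻¹) (meas_inv z) ?_
  filter_upwards [h] with x hx
  rw [norm_inv]
  exact inv_anti₀ hδ hx

lemma integrable_nsqinv (hδ : 0 < δ) (h : ∀ᵐ (x : ℝ) ∂ν, δ ≤ ‖(x : ℂ) - z‖) :
    Integrable (fun x : ℝ => (Complex.normSq ((x : ℂ) - z))⁻¹) ν := by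
  refine Integrable.mono' (integrable_const (δ ^ 2)⁻¹) (meas_nsqinv z) ?_
  filter_upwards [h] with x hx
  have h0 : (0:ℝ) < ‖(x:ℂ) - z‖ := lt_of_lt_of_le hδ hx
  have h2 : (0:ℝ) < Complex.normSq ((x:ℂ) - z) := by
    rw [normSq_eq_sq]; positivity
  rw [Real.norm_eq_abs, abs_of_pos (inv_pos.2 h2)]
  apply inv_anti₀ (by positivity)
  rw [normSq_eq_sq]; exact pow_le_pow_left₀ hδ.le hx 2

lemma ae_norm_ge (hz : z ∈ UHP) : ∀ᵐ (x : ℝ) ∂ν, z.im ≤ ‖(x : ℂ) - z‖ := by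
  filter_upwards with x
  calc z.im = |((x:ℂ) - z).im| := by
        simp [abs_of_pos hz.out]
    _ ≤ ‖(x:ℂ) - z‖ := Complex.abs_im_le_norm _
    _ = ‖(x:ℂ) - z‖ := rfl


lemma im_inv_eq (x : ℝ) (z : ℂ) :
    (((x:ℂ) - z)⁻¹).im = z.im * (Complex.normSq ((x:ℂ) - z))⁻¹ := by
  rw [Complex.inv_im]
  simp [div_eq_mul_inv]

lemma im_stT (hδ : 0 < δ) (h : ∀ᵐ (x : ℝ) ∂ν, δ ≤ ‖(x : ℂ) - z‖) :
    (stT ν z).im = z.im * Ifun ν z := by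
  unfold stT Ifun
  rw [← RCLike.im_eq_complex_im, ← integral_im (integrable_inv hδ h)]
  rw [← integral_const_mul]
  congr 1; funext x
  rw [RCLike.im_eq_complex_im, im_inv_eq]

lemma Ifun_pos [IsProbabilityMeasure ν] (hz : z ∈ UHP) : 0 < Ifun ν z := by
  unfold Ifun
  have hint := integrable_nsqinv (ν := ν) hz.out (ae_norm_ge hz)
  have hpos : ∀ x : ℝ, 0 < (Complex.normSq ((x:ℂ) - z))⁻¹ := by
    intro x
    have hne : ((x:ℂ) - z) ≠ 0 := by
      intro h
      have h2 := congrArg Complex.im h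
      simp only [Complex.sub_im, Complex.ofReal_im, Complex.zero_im, zero_sub,
        neg_eq_zero] at h2
      exact hz.out.ne' h2
    have : (0:ℝ) < Complex.normSq ((x:ℂ) - z) := Complex.normSq_pos.2 hne
    positivity
  rw [integral_pos_iff_support_of_nonneg (fun x => (hpos x).le) hint]
  have : Function.support (fun x : ℝ => (Complex.normSq ((x:ℂ) - z))⁻¹) = Set.univ :=
    Set.eq_univ_of_forall (fun x => (hpos x).ne')
  rw [this]
  simp [measure_univ]

lemma im_stT_pos [IsProbabilityMeasure ν] (hz : z ∈ UHP) : 0 < (stT ν z).im := by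
  rw [im_stT hz.out (ae_norm_ge hz)]
  exact mul_pos hz.out (Ifun_pos hz)

lemma stT_ne_zero [IsProbabilityMeasure ν] (hz : z ∈ UHP) : stT ν z ≠ 0 := by
  intro h
  have := im_stT_pos (ν := ν) hz
  rw [h] at this; simp at this

/-- Cauchy–Schwarz: `normSq (stT ν z) ≤ Ifun ν z` for a probability measure. -/
lemma normSq_stT_le [IsProbabilityMeasure ν] (hδ : 0 < δ)
    (h : ∀ᵐ (x : ℝ) ∂ν, δ ≤ ‖(x : ℂ) - z‖) :
    Complex.normSq (stT ν z) ≤ Ifun ν z := by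
  set g : ℝ → ℝ := fun x => ‖((x:ℂ) - z)⁻¹‖ with hg
  have hgint : Integrable g ν := (integrable_inv hδ h).norm
  have hg2 : ∀ x, g x ^ 2 = (Complex.normSq ((x:ℂ) - z))⁻¹ := by
    intro x
    rw [hg]
    simp only [norm_inv]
    rw [← Complex.normSq_inv, normSq_eq_sq, norm_inv]
  have hg2int : Integrable (fun x => g x ^ 2) ν := by
    simp_rw [hg2]; exact integrable_nsqinv hδ h
  set c : ℝ := ∫ x, g x ∂ν with hc
  have key : c ^ 2 ≤ ∫ x, g x ^ 2 ∂ν := by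
    have h0 : 0 ≤ ∫ x, (g x ^ 2 - 2 * c * g x + c ^ 2) ∂ν := by
      refine integral_nonneg fun x => ?_
      have : (0:ℝ) ≤ g x ^ 2 - 2 * c * g x + c ^ 2 := by nlinarith [sq_nonneg (g x - c)]
      exact this
    have hsub : Integrable (fun x => g x ^ 2 - 2 * c * g x) ν :=
      hg2int.sub (hgint.const_mul (2 * c))
    rw [integral_add hsub (integrable_const _),
      integral_sub hg2int (hgint.const_mul _), integral_const, integral_const_mul] at h0
    simp only [probReal_univ, measure_univ, ENNReal.toReal_one, one_smul, ← hc] at h0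
    nlinarith
  calc Complex.normSq (stT ν z) = ‖stT ν z‖ ^ 2 := normSq_eq_sq _
    _ ≤ c ^ 2 := by
        have h1 : ‖stT ν z‖ ≤ c := norm_integral_le_integral_norm _
        have h2 : (0:ℝ) ≤ ‖stT ν z‖ := norm_nonneg _
        nlinarith
    _ ≤ ∫ x, g x ^ 2 ∂ν := key
    _ = Ifun ν z := by unfold Ifun; congr 1; funext x; rw [hg2]

/-- `Im (nrT ν z) ≥ Im z` on the upper half-plane. -/
lemma im_nrT_ge [IsProbabilityMeasure ν] (hz : z ∈ UHP) : z.im ≤ (nrT ν z).im := by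
  have hae := ae_norm_ge (ν := ν) hz
  have hI := Ifun_pos (ν := ν) hz
  have hm := im_stT (ν := ν) hz.out hae
  have hns : 0 < Complex.normSq (stT ν z) :=
    Complex.normSq_pos.2 (stT_ne_zero hz)
  have hcs := normSq_stT_le (ν := ν) hz.out hae
  unfold nrT
  rw [Complex.neg_im, Complex.inv_im, hm]
  rw [neg_div, neg_neg, le_div_iff₀ hns]
  exact mul_le_mul_of_nonneg_left hcs hz.out.le


/-- Differentiability of the Stieltjes transform away from the measure. -/
lemma stT_hasDerivAt (hδ : 0 < δ) (h : ∀ᵐ (x : ℝ) ∂ν, δ ≤ ‖(x : ℂ) - z‖) :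
    HasDerivAt (stT ν) (∫ x : ℝ, (((x : ℂ) - z) ^ 2)⁻¹ ∂ν) z := by
  have key := hasDerivAt_integral_of_dominated_loc_of_deriv_le
    (F := fun (z' : ℂ) (x : ℝ) => ((x : ℂ) - z')⁻¹)
    (F' := fun (z' : ℂ) (x : ℝ) => (((x : ℂ) - z') ^ 2)⁻¹)
    (x₀ := z) (s := ball z (δ / 2)) (bound := fun _ => ((δ / 2) ^ 2)⁻¹) (μ := ν)
    (ball_mem_nhds z (by positivity))
    (Eventually.of_forall fun z' => meas_inv z')
    (integrable_inv hδ h)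
    (meas_sqinv z)
    ?_ (integrable_const _) ?_
  · exact key.2
  · -- bound
    filter_upwards [h] with x hx z' hz'
    have hd : δ / 2 ≤ ‖(x : ℂ) - z'‖ := by
      have := norm_sub_norm_le ((x:ℂ) - z) ((x:ℂ) - z')
      have h2 : ‖((x:ℂ) - z) - ((x:ℂ) - z')‖ = ‖z' - z‖ := by ring_nf
      rw [h2] at this
      have h3 : ‖z' - z‖ < δ / 2 := by
        rw [← dist_eq_norm]; exact mem_ball.1 hz'
      linarith
    rw [norm_inv, norm_pow]
    have : (0:ℝ) < ‖(x:ℂ) - z'‖ := lt_of_lt_of_le (by positivity) hd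
    apply inv_anti₀ (by positivity)
    exact pow_le_pow_left₀ (by positivity) hd 2
  · -- differentiability
    filter_upwards [h] with x hx z' hz'
    have hd : (x : ℂ) - z' ≠ 0 := by
      intro h0
      have : δ / 2 ≤ ‖(x : ℂ) - z'‖ := by
        have := norm_sub_norm_le ((x:ℂ) - z) ((x:ℂ) - z')
        have h2 : ‖((x:ℂ) - z) - ((x:ℂ) - z')‖ = ‖z' - z‖ := by ring_nf
        rw [h2] at this
        have h3 : ‖z' - z‖ < δ / 2 := by
          rw [← dist_eq_norm]; exact mem_ball.1 hz'
        linarith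
      rw [h0] at this; simp at this; linarith
    have := ((hasDerivAt_id z').const_sub ((x : ℂ))).inv hd
    refine this.congr_deriv ?_
    simp only [id_eq]
    field_simp
  
lemma stT_differentiableAt (hδ : 0 < δ) (h : ∀ᵐ (x : ℝ) ∂ν, δ ≤ ‖(x : ℂ) - z‖) :
    DifferentiableAt ℂ (stT ν) z := (stT_hasDerivAt hδ h).differentiableAt

lemma stT_diffOn_UHP : DifferentiableOn ℂ (stT ν) UHP := by
  intro z hz
  exact (stT_differentiableAt hz.out (ae_norm_ge hz)).differentiableWithinAt


end Basic

section SP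
open Complex
/-- Möbius map from the disk to the half-plane sending `0 ↦ w`. -/
private noncomputable def phi (w : ℂ) (u : ℂ) : ℂ := (w - (starRingEnd ℂ) w * u) / (1 - u)
/-- Möbius map from the half-plane to the disk sending `b ↦ 0`. -/
private noncomputable def psi (b : ℂ) (v : ℂ) : ℂ := (v - b) / (v - (starRingEnd ℂ) b)

lemma one_sub_ne {u : ℂ} (hu : u ∈ ball (0:ℂ) 1) : (1:ℂ) - u ≠ 0 := by
  intro h
  have : u = 1 := by linear_combination -h
  rw [this] at hu
  simp at hu

lemma normSq_lt_one {u : ℂ} (hu : u ∈ ball (0:ℂ) 1) : normSq u < 1 := by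
  have : ‖u‖ < 1 := by simpa [dist_eq_norm] using mem_ball.1 hu
  have h2 := Complex.sq_norm u
  nlinarith [norm_nonneg u]

lemma phi_mem {w : ℂ} (hw : w ∈ UHP) {u : ℂ} (hu : u ∈ ball (0:ℂ) 1) :
    phi w u ∈ UHP := by
  have hne := one_sub_ne hu
  have hns : 0 < normSq (1 - u) := normSq_pos.2 hne
  have hnu := normSq_lt_one hu
  show 0 < (phi w u).im
  unfold phi
  rw [Complex.div_im]
  rw [div_sub_div_same]
  apply div_pos ?_ hns
  have : (w - (starRingEnd ℂ) w * u).im * (1 - u).re - (w - (starRingEnd ℂ) w * u).re * (1 - u).im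
      = w.im * (1 - normSq u) := by
    simp [Complex.normSq_apply]
    ring
  rw [this]
  have : (0:ℝ) < w.im := hw.out
  nlinarith

lemma psi_mem {b v : ℂ} (hb : 0 < b.im) (hv : 0 < v.im) : psi b v ∈ ball (0:ℂ) 1 := by
  have hden : v - (starRingEnd ℂ) b ≠ 0 := by
    intro h
    have h2 := congrArg Complex.im h
    simp only [Complex.sub_im, Complex.conj_im, Complex.zero_im, sub_neg_eq_add] at h2
    linarith
  rw [mem_ball, dist_eq_norm, sub_zero]
  unfold psi
  rw [norm_div]
  rw [div_lt_one (norm_pos_iff.mpr hden)]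
  have key : normSq (v - b) < normSq (v - (starRingEnd ℂ) b) := by
    simp [Complex.normSq_apply]
    nlinarith
  calc ‖v - b‖ = Real.sqrt (normSq (v - b)) := by
        rw [Complex.norm_def]
    _ < Real.sqrt (normSq (v - (starRingEnd ℂ) b)) := by
        apply Real.sqrt_lt_sqrt (normSq_nonneg _) key
    _ = ‖v - (starRingEnd ℂ) b‖ := by rw [Complex.norm_def]

lemma psi_deriv {b : ℂ} (hb : 0 < b.im) : HasDerivAt (psi b) ((b - (starRingEnd ℂ) b)⁻¹) b := by
  have hden : b - (starRingEnd ℂ) b ≠ 0 := by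
    rw [Complex.sub_conj]
    simp only [ne_eq, mul_eq_zero, Complex.ofReal_eq_zero, Complex.I_ne_zero, or_false]
    intro h; simp at h; linarith
  have h1 : HasDerivAt (fun v => v - b) 1 b := (hasDerivAt_id b).sub_const b
  have h2 : HasDerivAt (fun v => v - (starRingEnd ℂ) b) 1 b := (hasDerivAt_id b).sub_const _
  have := h1.div h2 hden
  refine this.congr_deriv ?_
  field_simp
  ring

lemma phi_deriv (w : ℂ) : HasDerivAt (phi w) (w - (starRingEnd ℂ) w) 0 := by
  have h1 : HasDerivAt (fun u : ℂ => w - (starRingEnd ℂ) w * u) (-(starRingEnd ℂ) w) 0 := by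
    simpa using ((hasDerivAt_id (0:ℂ)).const_mul ((starRingEnd ℂ) w)).const_sub w
  have h2 : HasDerivAt (fun u : ℂ => 1 - u) (-1) 0 := by
    simpa using (hasDerivAt_id (0:ℂ)).const_sub 1
  have hden : (1:ℂ) - 0 ≠ 0 := by norm_num
  have := h1.div h2 hden
  refine this.congr_deriv ?_
  field_simp
  ring

lemma phi_zero (w : ℂ) : phi w 0 = w := by unfold phi; simp

lemma psi_self (b : ℂ) : psi b b = 0 := by unfold psi; simp

/-- **Schwarz–Pick** estimate for self-maps of the upper half-plane
(allowing boundary values). -/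
lemma schwarzPick {h : ℂ → ℂ} (hd : DifferentiableOn ℂ h UHP)
    (hmaps : ∀ z ∈ UHP, 0 ≤ (h z).im) {w : ℂ} (hw : w ∈ UHP) :
    ‖deriv h w‖ * w.im ≤ (h w).im := by
  by_cases hstrict : ∀ z ∈ UHP, 0 < (h z).im
  · -- strict case: Möbius conjugation + Schwarz lemma
    set b := h w with hb
    have hbim : 0 < b.im := hstrict w hw
    set G : ℂ → ℂ := fun u => psi b (h (phi w u)) with hG
    have hG0 : G 0 = 0 := by rw [hG]; simp [phi_zero, ← hb, psi_self]
    have hGdiff : DifferentiableOn ℂ G (ball (0:ℂ) 1) := by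
      intro u hu
      have h1 : DifferentiableAt ℂ (phi w) u := by
        apply DifferentiableAt.div
        · exact (differentiable_const _).differentiableAt.sub
            ((differentiable_id.const_mul _).differentiableAt)
        · exact (differentiable_const _).differentiableAt.sub differentiable_id.differentiableAt
        · exact one_sub_ne hu
      have hmem := phi_mem hw hu
      have h2 : DifferentiableAt ℂ h (phi w u) :=
        (hd (phi w u) hmem).differentiableAt (isOpen_UHP.mem_nhds hmem)
      have h3 : DifferentiableAt ℂ (psi b) (h (phi w u)) := by
        apply DifferentiableAt.div
        · exact differentiable_id.differentiableAt.sub (differentiable_const _).differentiableAt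
        · exact differentiable_id.differentiableAt.sub (differentiable_const _).differentiableAt
        · intro hc
          have h2 := congrArg Complex.im hc
          simp only [Complex.sub_im, Complex.conj_im, Complex.zero_im, sub_neg_eq_add] at h2
          have := (hstrict _ hmem)
          linarith
      exact ((h3.comp (phi w u) h2).comp u h1).differentiableWithinAt
    have hGmaps : MapsTo G (ball (0:ℂ) 1) (ball (G 0) 1) := by
      rw [hG0]
      intro u hu
      exact psi_mem hbim (hstrict _ (phi_mem hw hu))
    have hSchwarz := Complex.norm_deriv_le_div_of_mapsTo_ball hGdiff (hGmaps.mono_right ball_subset_closedBall) one_pos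
    -- compute deriv G 0
    have hphi : HasDerivAt (phi w) (w - (starRingEnd ℂ) w) 0 := phi_deriv w
    have hh : HasDerivAt h (deriv h w) w := by
      have := (hd w hw).differentiableAt (isOpen_UHP.mem_nhds hw)
      exact this.hasDerivAt
    have hpsi : HasDerivAt (psi b) ((b - (starRingEnd ℂ) b)⁻¹) b := psi_deriv hbim
    have hcomp1 : HasDerivAt (fun u => h (phi w u)) (deriv h w * (w - (starRingEnd ℂ) w)) 0 := by
      have := HasDerivAt.comp (0:ℂ) (by rw [phi_zero]; exact hh) hphi
      exact this
    have hcomp2 : HasDerivAt G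
        ((b - (starRingEnd ℂ) b)⁻¹ * (deriv h w * (w - (starRingEnd ℂ) w))) 0 := by
      have := HasDerivAt.comp (0:ℂ) (by rw [show h (phi w 0) = b by rw [phi_zero]]; exact hpsi)
        hcomp1
      exact this
    have hderivG : deriv G 0 = (b - (starRingEnd ℂ) b)⁻¹ * (deriv h w * (w - (starRingEnd ℂ) w)) :=
      hcomp2.deriv
    rw [hderivG] at hSchwarz
    have hb2 : ‖b - (starRingEnd ℂ) b‖ = 2 * b.im := by
      rw [Complex.sub_conj]
      simp only [norm_mul, Complex.norm_real, Real.norm_eq_abs,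
        Complex.norm_I, mul_one]
      rw [abs_of_pos hbim, abs_two]
    have hw2 : ‖w - (starRingEnd ℂ) w‖ = 2 * w.im := by
      rw [Complex.sub_conj]
      simp only [norm_mul, Complex.norm_real, Real.norm_eq_abs,
        Complex.norm_I, mul_one]
      rw [abs_of_pos hw.out, abs_two]
    have hnorm : ‖(b - (starRingEnd ℂ) b)⁻¹ * (deriv h w * (w - (starRingEnd ℂ) w))‖
        = (2 * b.im)⁻¹ * (‖deriv h w‖ * (2 * w.im)) := by
      rw [norm_mul, norm_mul, norm_inv, hb2, hw2]
    rw [hnorm] at hSchwarz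
    have h1 : (0:ℝ) < 2 * b.im := by linarith
    have h2 : (0:ℝ) < w.im := hw.out
    rw [div_self (one_ne_zero)] at hSchwarz
    rw [inv_mul_le_iff₀ h1] at hSchwarz
    calc ‖deriv h w‖ * w.im = (‖deriv h w‖ * (2 * w.im)) / 2 := by ring
      _ ≤ (1 * (2 * b.im)) / 2 := by linarith
      _ = b.im := by ring
  · -- boundary case: `h` is constant
    push_neg at hstrict
    obtain ⟨z₀, hz₀, hz₀im⟩ := hstrict
    have hz₀im' : (h z₀).im = 0 := le_antisymm hz₀im (hmaps z₀ hz₀)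
    set f : ℂ → ℂ := fun z => Complex.exp (Complex.I * h z) with hf
    have hfd : DifferentiableOn ℂ f UHP := by
      intro z hz
      exact ((hd z hz).const_mul _).cexp
    have hmax : IsMaxOn (norm ∘ f) UHP z₀ := by
      intro z hz
      simp only [Function.comp_apply, hf, Complex.norm_exp,
        Set.mem_setOf_eq]
      rw [show (Complex.I * h z).re = -(h z).im by simp,
        show (Complex.I * h z₀).re = -(h z₀).im by simp, hz₀im']
      apply Real.exp_le_exp.2
      simpa using hmaps z hz
    have heq := Complex.eqOn_of_isPreconnected_of_isMaxOn_norm isPreconnected_UHP isOpen_UHP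
      hfd hz₀ hmax
    -- so f is constant on UHP, hence deriv h w = 0
    have hfw : f w = f z₀ := heq hw
    have hfconst : ∀ᶠ z in 𝓝 w, f z = f z₀ := by
      filter_upwards [isOpen_UHP.mem_nhds hw] with z hz
      exact heq hz
    have hderivf : deriv f w = 0 := by
      have : deriv f w = deriv (fun _ : ℂ => f z₀) w := Filter.EventuallyEq.deriv_eq hfconst
      rw [this, deriv_const]
    have hh : HasDerivAt h (deriv h w) w :=
      ((hd w hw).differentiableAt (isOpen_UHP.mem_nhds hw)).hasDerivAt
    have hfderiv : HasDerivAt f (Complex.exp (Complex.I * h w) * (Complex.I * deriv h w)) w := by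
      have h1 : HasDerivAt (fun z => Complex.I * h z) (Complex.I * deriv h w) w :=
        hh.const_mul _
      exact h1.cexp
    have := hfderiv.deriv
    rw [hderivf] at this
    have hexp : Complex.exp (Complex.I * h w) ≠ 0 := Complex.exp_ne_zero _
    have : deriv h w = 0 := by
      have h2 : Complex.I * deriv h w = 0 := by
        by_contra hc
        exact hc (by
          have := mul_eq_zero.1 this.symm
          rcases this with h3 | h3
          · exact absurd h3 hexp
          · exact h3)
      have := mul_eq_zero.1 h2
      rcases this with h3 | h3
      · exact absurd h3 Complex.I_ne_zero
      · exact h3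
    rw [this]
    simpa using hmaps w hw


end SP

section Subord
variable {μ : Measure ℝ} [IsProbabilityMeasure μ] {t : ℝ} {ω : ℂ → ℂ}
/-- `h_μ(w) = F_μ(w) - w`. -/
noncomputable def hfun (μ : Measure ℝ) (w : ℂ) : ℂ := nrT μ w - w

variable {μ : Measure ℝ} [IsProbabilityMeasure μ]

lemma hfun_diffOn : DifferentiableOn ℂ (hfun μ) UHP := by
  have h1 : DifferentiableOn ℂ (nrT μ) UHP := by
    intro z hz
    unfold nrT
    exact (((stT_diffOn_UHP z hz).inv (stT_ne_zero hz)).neg)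
  exact h1.sub differentiableOn_id

lemma hfun_im_nonneg : ∀ w ∈ UHP, 0 ≤ (hfun μ w).im := by
  intro w hw
  have := im_nrT_ge (ν := μ) hw
  unfold hfun
  rw [Complex.sub_im]
  linarith

lemma nrT_hasDerivAt {w : ℂ} (hw : w ∈ UHP) :
    HasDerivAt (nrT μ) (deriv (nrT μ) w) w := by
  have h1 : DifferentiableOn ℂ (nrT μ) UHP := fun z hz =>
    (((stT_diffOn_UHP z hz).inv (stT_ne_zero hz)).neg)
  exact ((h1 w hw).differentiableAt (isOpen_UHP.mem_nhds hw)).hasDerivAt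

lemma hfun_hasDerivAt {w : ℂ} (hw : w ∈ UHP) :
    HasDerivAt (hfun μ) (deriv (hfun μ) w) w :=
  ((hfun_diffOn w hw).differentiableAt (isOpen_UHP.mem_nhds hw)).hasDerivAt

variable {t : ℝ} {ω : ℂ → ℂ}

lemma omega_fix (hω : IsSubordT μ t ω) (ht : 1 < t) :
    ∀ z ∈ UHP, ω z = z + (((t - 1 : ℝ)) : ℂ) * hfun μ (ω z) := by
  intro z hz
  have := hω.eqn z hz
  unfold hfun
  push_cast
  linear_combination this

lemma omega_im_eq (hω : IsSubordT μ t ω) (ht : 1 < t) {z : ℂ} (hz : z ∈ UHP) :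
    (ω z).im = z.im + (t - 1) * (hfun μ (ω z)).im := by
  have := congrArg Complex.im (omega_fix hω ht z hz)
  simpa [Complex.add_im, Complex.im_ofReal_mul] using this

/-- Statement (i): `Re ω' ≥ 1/2` on `ℂ⁺`, plus the auxiliary identity used later. -/
lemma re_deriv_omega (hω : IsSubordT μ t ω) (ht : 1 < t) {z : ℂ} (hz : z ∈ UHP) :
    (1 : ℝ) / 2 ≤ (deriv ω z).re := by
  have hwz : ω z ∈ UHP := hω.maps z hz
  set c : ℂ := (((t - 1 : ℝ)) : ℂ) with hc
  set d : ℂ := c * deriv (hfun μ) (ω z) with hd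
  -- derivative equation
  have hωd : HasDerivAt ω (deriv ω z) z :=
    ((hω.diff z hz).differentiableAt (isOpen_UHP.mem_nhds hz)).hasDerivAt
  have hrhs : HasDerivAt (fun z' => z' + c * hfun μ (ω z'))
      (1 + d * deriv ω z) z := by
    have h1 : HasDerivAt (fun z' => hfun μ (ω z')) (deriv (hfun μ) (ω z) * deriv ω z) z :=
      HasDerivAt.comp z (hfun_hasDerivAt hwz) hωd
    have h2 := ((h1.const_mul c).const_add (0:ℂ))
    have h3 := (hasDerivAt_id z).add (h1.const_mul c)
    refine h3.congr_deriv ?_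
    rw [hd]; ring
  have heq : HasDerivAt ω (1 + d * deriv ω z) z := by
    apply hrhs.congr_of_eventuallyEq
    filter_upwards [isOpen_UHP.mem_nhds hz] with z' hz'
    exact omega_fix hω ht z' hz'
  have huniq : deriv ω z = 1 + d * deriv ω z := by
    rw [← heq.deriv]
  -- bound on d
  have hSP := schwarzPick (hfun_diffOn (μ := μ)) (hfun_im_nonneg (μ := μ)) hwz
  have hnc : ‖c‖ = t - 1 := by
    rw [hc, Complex.norm_real, Real.norm_eq_abs, abs_of_pos (by linarith)]
  have hdb : ‖d‖ * (ω z).im ≤ (t - 1) * (hfun μ (ω z)).im := by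
    rw [hd, norm_mul, hnc]
    calc (t-1) * ‖deriv (hfun μ) (ω z)‖ * (ω z).im
        = (t-1) * (‖deriv (hfun μ) (ω z)‖ * (ω z).im) := by ring
      _ ≤ (t-1) * (hfun μ (ω z)).im := by
          apply mul_le_mul_of_nonneg_left hSP (by linarith)
  have him := omega_im_eq hω ht hz
  have hlt : ‖d‖ < 1 := by
    have h1 : ‖d‖ * (ω z).im ≤ (ω z).im - z.im := by linarith
    have h2 : 0 < (ω z).im := hwz.out
    have h3 : 0 < z.im := hz.out
    nlinarith [norm_nonneg d]
  -- conclude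
  have hne : (1:ℂ) - d ≠ 0 := by
    intro h0
    have : d = 1 := by linear_combination -h0
    rw [this] at hlt; simp at hlt
  have hsolve : deriv ω z = (1 - d)⁻¹ := by
    have h1 : deriv ω z * (1 - d) = 1 := by linear_combination huniq
    field_simp at h1 ⊢
    linear_combination h1
  rw [hsolve, Complex.inv_re]
  have hnsq : 0 < Complex.normSq (1 - d) := Complex.normSq_pos.2 hne
  rw [le_div_iff₀ hnsq]
  have hns : Complex.normSq d < 1 := by
    have : Complex.normSq d = ‖d‖ ^ 2 := by rw [← Complex.sq_norm]
    rw [this]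
    nlinarith [norm_nonneg d]
  have h1 : Complex.normSq (1 - d) = (1 - d.re)^2 + d.im^2 := by
    simp [Complex.normSq_apply]
    ring
  have h2 : Complex.normSq d = d.re^2 + d.im^2 := by simp [Complex.normSq_apply]; ring
  have h3 : (1 - d : ℂ).re = 1 - d.re := by simp
  rw [h1, h3]
  nlinarith

end Subord

section Key
variable {ω : ℂ → ℂ}
/-- Noshiro–Warschawski inequality on the open half-plane. -/
lemma key_ineq_UHP (hdiff : DifferentiableOn ℂ ω UHP)
    (hre : ∀ z ∈ UHP, (1:ℝ)/2 ≤ (deriv ω z).re)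
    (hcont : ContinuousOn ω CUHP)
    {z w : ℂ} (hz : z ∈ UHP) (hw : w ∈ UHP) :
    Complex.normSq (z - w) / 2 ≤ ((ω z - ω w) * (starRingEnd ℂ) (z - w)).re := by
  set n : ℝ := Complex.normSq (z - w) with hn
  set p : ℝ → ℂ := fun s => w + (s : ℂ) * (z - w) with hp
  have hpmem : ∀ s ∈ Icc (0:ℝ) 1, p s ∈ UHP := by
    intro s hs
    have := convex_UHP hw hz (by linarith [hs.1, hs.2] : 0 ≤ 1 - s) hs.1 (by ring)
    convert this using 1
    rw [hp]
    simp only [smul_eq_mul]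
    push_cast
    ring_nf
    rw [Complex.real_smul, Complex.real_smul]
    push_cast
    ring
  set f : ℝ → ℝ := fun s => (ω (p s) * (starRingEnd ℂ) (z - w)).re - s * (n / 2) with hf
  have hderiv : ∀ s ∈ Ioo (0:ℝ) 1, ∃ f' : ℝ, HasDerivAt f f' s ∧ 0 ≤ f' := by
    intro s hs
    have hmem := hpmem s (Ioo_subset_Icc_self hs)
    have hωd : HasDerivAt ω (deriv ω (p s)) (p s) :=
      ((hdiff _ hmem).differentiableAt (isOpen_UHP.mem_nhds hmem)).hasDerivAt
    have hpd : HasDerivAt p (z - w) s := by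
      rw [hp]
      simpa using ((Complex.ofRealCLM.hasDerivAt (x := s)).smul_const (z - w)).const_add w
    have h1 : HasDerivAt (fun s : ℝ => ω (p s)) (deriv ω (p s) * (z - w)) s := by
      have := (hωd.hasFDerivAt.restrictScalars ℝ).comp_hasDerivAt s hpd
      exact this.congr_deriv (by simp [mul_comm])
    have h2 : HasDerivAt (fun s : ℝ => ω (p s) * (starRingEnd ℂ) (z - w))
        (deriv ω (p s) * (z - w) * (starRingEnd ℂ) (z - w)) s := h1.mul_const _
    have h3 : HasDerivAt (fun s : ℝ => (ω (p s) * (starRingEnd ℂ) (z - w)).re)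
        ((deriv ω (p s) * (z - w) * (starRingEnd ℂ) (z - w)).re) s :=
      (Complex.reCLM.hasFDerivAt.comp_hasDerivAt s h2)
    refine ⟨(deriv ω (p s) * (z - w) * (starRingEnd ℂ) (z - w)).re - 1 * (n / 2),
      h3.sub ((hasDerivAt_id s).mul_const (n/2)), ?_⟩
    · have hmc : deriv ω (p s) * (z - w) * (starRingEnd ℂ) (z - w) = deriv ω (p s) * (n : ℂ) := by
        rw [mul_assoc, Complex.mul_conj, hn]
      rw [hmc]
      have : (deriv ω (p s) * (n : ℂ)).re = (deriv ω (p s)).re * n := by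
        rw [mul_comm, Complex.re_ofReal_mul]
        ring
      rw [this]
      have h4 := hre _ hmem
      have hn0 : 0 ≤ n := Complex.normSq_nonneg _
      nlinarith
  -- monotonicity on [0,1]
  have hfc : ContinuousOn f (Icc 0 1) := by
    apply ContinuousOn.sub
    · apply Complex.continuous_re.comp_continuousOn
      apply ContinuousOn.mul ?_ continuousOn_const
      apply hcont.comp
      · exact (Continuous.continuousOn (by continuity))
      · intro s hs
        exact le_of_lt (hpmem s hs).out
    · exact (continuous_id.mul continuous_const).continuousOn
  have hmono : MonotoneOn f (Icc 0 1) := by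
    apply monotoneOn_of_deriv_nonneg (convex_Icc 0 1) hfc
    · intro s hs
      rw [interior_Icc] at hs
      obtain ⟨f', hf', _⟩ := hderiv s hs
      exact hf'.differentiableAt.differentiableWithinAt
    · intro s hs
      rw [interior_Icc] at hs
      obtain ⟨f', hf', hf'0⟩ := hderiv s hs
      rw [hf'.deriv]
      exact hf'0
  have h01 := hmono (left_mem_Icc.2 zero_le_one) (right_mem_Icc.2 zero_le_one) zero_le_one
  have hp0 : p 0 = w := by rw [hp]; simp
  have hp1 : p 1 = z := by rw [hp]; push_cast; ring
  rw [hf] at h01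
  simp only [hp0, hp1, zero_mul, one_mul, sub_zero] at h01
  have hsub : ((ω z - ω w) * (starRingEnd ℂ) (z - w)).re
      = (ω z * (starRingEnd ℂ) (z - w)).re - (ω w * (starRingEnd ℂ) (z - w)).re := by
    rw [sub_mul, Complex.sub_re]
  rw [hsub, hn]
  linarith

/-- The key inequality extended to the closed half-plane. -/
lemma key_ineq (hdiff : DifferentiableOn ℂ ω UHP)
    (hre : ∀ z ∈ UHP, (1:ℝ)/2 ≤ (deriv ω z).re)
    (hcont : ContinuousOn ω CUHP)
    {z w : ℂ} (hz : z ∈ CUHP) (hw : w ∈ CUHP) :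
    Complex.normSq (z - w) / 2 ≤ ((ω z - ω w) * (starRingEnd ℂ) (z - w)).re := by
  have hmain : ∀ᶠ η : ℝ in 𝓝[>] 0, Complex.normSq (z - w) / 2 ≤
      ((ω (z + (η:ℂ) * Complex.I) - ω (w + (η:ℂ) * Complex.I)) * (starRingEnd ℂ) (z - w)).re := by
    filter_upwards [self_mem_nhdsWithin] with η hη
    have hη' : (0:ℝ) < η := hη
    have hz' : z + (η:ℂ) * Complex.I ∈ UHP := by
      show 0 < (z + (η:ℂ) * Complex.I).im
      simp only [Complex.add_im, Complex.mul_im, Complex.ofReal_re, Complex.I_im,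
        Complex.ofReal_im, Complex.I_re, mul_zero, mul_one, zero_mul, add_zero]
      have := hz.out; linarith
    have hw' : w + (η:ℂ) * Complex.I ∈ UHP := by
      show 0 < (w + (η:ℂ) * Complex.I).im
      simp only [Complex.add_im, Complex.mul_im, Complex.ofReal_re, Complex.I_im,
        Complex.ofReal_im, Complex.I_re, mul_zero, mul_one, zero_mul, add_zero]
      have := hw.out; linarith
    have := key_ineq_UHP hdiff hre hcont hz' hw'
    have hzw : z + (η:ℂ) * Complex.I - (w + (η:ℂ) * Complex.I) = z - w := by ring
    rwa [hzw] at this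
  have htz : Tendsto (fun η : ℝ => ω (z + (η:ℂ) * Complex.I)) (𝓝[>] 0) (𝓝 (ω z)) := by
    have h1 : Tendsto (fun η : ℝ => z + (η:ℂ) * Complex.I) (𝓝[>] 0) (𝓝[CUHP] z) := by
      rw [tendsto_nhdsWithin_iff]
      constructor
      · have : Tendsto (fun η : ℝ => z + (η:ℂ) * Complex.I) (𝓝 0) (𝓝 z) := by
          have : Continuous (fun η : ℝ => z + (η:ℂ) * Complex.I) := by continuity
          simpa using this.tendsto (0:ℝ)
        exact this.mono_left nhdsWithin_le_nhds
      · filter_upwards [self_mem_nhdsWithin] with η hη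
        show 0 ≤ (z + (η:ℂ) * Complex.I).im
        simp only [Complex.add_im, Complex.mul_im, Complex.ofReal_re, Complex.I_im,
          Complex.ofReal_im, Complex.I_re, mul_zero, mul_one, zero_mul, add_zero]
        have := hz.out; have : (0:ℝ) < η := hη; linarith [hz.out]
    exact (hcont z hz).tendsto.comp h1
  have htw : Tendsto (fun η : ℝ => ω (w + (η:ℂ) * Complex.I)) (𝓝[>] 0) (𝓝 (ω w)) := by
    have h1 : Tendsto (fun η : ℝ => w + (η:ℂ) * Complex.I) (𝓝[>] 0) (𝓝[CUHP] w) := by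
      rw [tendsto_nhdsWithin_iff]
      constructor
      · have : Tendsto (fun η : ℝ => w + (η:ℂ) * Complex.I) (𝓝 0) (𝓝 w) := by
          have : Continuous (fun η : ℝ => w + (η:ℂ) * Complex.I) := by continuity
          simpa using this.tendsto (0:ℝ)
        exact this.mono_left nhdsWithin_le_nhds
      · filter_upwards [self_mem_nhdsWithin] with η hη
        show 0 ≤ (w + (η:ℂ) * Complex.I).im
        simp only [Complex.add_im, Complex.mul_im, Complex.ofReal_re, Complex.I_im,
          Complex.ofReal_im, Complex.I_re, mul_zero, mul_one, zero_mul, add_zero]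
        have : (0:ℝ) < η := hη; linarith [hw.out]
    exact (hcont w hw).tendsto.comp h1
  have hlim : Tendsto (fun η : ℝ =>
      ((ω (z + (η:ℂ) * Complex.I) - ω (w + (η:ℂ) * Complex.I)) * (starRingEnd ℂ) (z - w)).re)
      (𝓝[>] 0) (𝓝 (((ω z - ω w) * (starRingEnd ℂ) (z - w)).re)) := by
    apply Tendsto.comp (Complex.continuous_re.tendsto _)
    exact (htz.sub htw).mul_const _
  exact ge_of_tendsto hlim hmain

/-- Lower Lipschitz bound. -/
lemma norm_lower (hdiff : DifferentiableOn ℂ ω UHP)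
    (hre : ∀ z ∈ UHP, (1:ℝ)/2 ≤ (deriv ω z).re)
    (hcont : ContinuousOn ω CUHP)
    {z w : ℂ} (hz : z ∈ CUHP) (hw : w ∈ CUHP) :
    ‖z - w‖ ≤ 2 * ‖ω z - ω w‖ := by
  have hk := key_ineq hdiff hre hcont hz hw
  have h1 : ((ω z - ω w) * (starRingEnd ℂ) (z - w)).re ≤ ‖ω z - ω w‖ * ‖z - w‖ := by
    calc ((ω z - ω w) * (starRingEnd ℂ) (z - w)).re ≤ ‖(ω z - ω w) * (starRingEnd ℂ) (z - w)‖ :=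
          Complex.re_le_norm _
      _ = ‖ω z - ω w‖ * ‖z - w‖ := by
          rw [norm_mul, RCLike.norm_conj]
  have h2 : Complex.normSq (z - w) = ‖z - w‖ ^ 2 := by rw [← Complex.sq_norm]
  rw [h2] at hk
  rcases eq_or_ne z w with rfl | hne
  · simp
  · have h3 : 0 < ‖z - w‖ := by
      rw [norm_pos_iff]; exact sub_ne_zero.2 hne
    nlinarith [norm_nonneg (ω z - ω w)]

/-- Injectivity on the closed half-plane. -/
lemma injOn_CUHP (hdiff : DifferentiableOn ℂ ω UHP)
    (hre : ∀ z ∈ UHP, (1:ℝ)/2 ≤ (deriv ω z).re)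
    (hcont : ContinuousOn ω CUHP) : Set.InjOn ω CUHP := by
  intro z hz w hw h
  have := norm_lower hdiff hre hcont hz hw
  rw [h] at this
  simp only [sub_self, norm_zero, mul_zero] at this
  have : z - w = 0 := by
    have := norm_le_zero_iff.1 (le_trans this (le_refl 0))
    exact this
  linear_combination this

lemma ofReal_mem_CUHP (E : ℝ) : ((E:ℝ):ℂ) ∈ CUHP := by
  show (0:ℝ) ≤ ((E:ℝ):ℂ).im
  simp

/-- Statement (ii). -/
lemma strictMono_re (hdiff : DifferentiableOn ℂ ω UHP)
    (hre : ∀ z ∈ UHP, (1:ℝ)/2 ≤ (deriv ω z).re)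
    (hcont : ContinuousOn ω CUHP) :
    StrictMono (fun E : ℝ => (ω (E : ℂ)).re) := by
  intro E E' hEE'
  have hk := key_ineq hdiff hre hcont (ofReal_mem_CUHP E') (ofReal_mem_CUHP E)
  have h1 : ((E':ℂ) - (E:ℂ)) = ((E' - E : ℝ) : ℂ) := by push_cast; ring
  rw [h1] at hk
  have h2 : (starRingEnd ℂ) ((E' - E : ℝ) : ℂ) = ((E' - E : ℝ) : ℂ) := Complex.conj_ofReal _
  rw [h2] at hk
  have h3 : ((ω E' - ω E) * ((E' - E : ℝ) : ℂ)).re = ((ω E').re - (ω E).re) * (E' - E) := by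
    rw [mul_comm, Complex.re_ofReal_mul, Complex.sub_re]
    ring
  have h4 : Complex.normSq ((E' - E : ℝ) : ℂ) = (E' - E)^2 := by
    rw [Complex.normSq_ofReal]; ring
  rw [h3, h4] at hk
  have h5 : 0 < E' - E := by linarith
  nlinarith

/-- Statement (iii): homeomorphism onto the image. -/
lemma homeo_exists (hdiff : DifferentiableOn ℂ ω UHP)
    (hre : ∀ z ∈ UHP, (1:ℝ)/2 ≤ (deriv ω z).re)
    (hcont : ContinuousOn ω CUHP) :
    ∃ e : ↥CUHP ≃ₜ ↥(ω '' CUHP), ∀ z : ↥CUHP, (e z : ℂ) = ω (z : ℂ) := by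
  have hinj := injOn_CUHP hdiff hre hcont
  set F : ↥CUHP → ↥(ω '' CUHP) := fun z => ⟨ω z, Set.mem_image_of_mem ω z.2⟩ with hF
  have hbij : Function.Bijective F := by
    constructor
    · intro a b hab
      apply Subtype.ext
      exact hinj a.2 b.2 (congrArg Subtype.val hab)
    · rintro ⟨y, hy⟩
      obtain ⟨x, hx, rfl⟩ := hy
      exact ⟨⟨x, hx⟩, rfl⟩
  set e : ↥CUHP ≃ ↥(ω '' CUHP) := Equiv.ofBijective F hbij with he
  have hcontF : Continuous F := by
    apply Continuous.subtype_mk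
    exact hcont.restrict
  have hcontInv : Continuous e.symm := by
    apply LipschitzWith.continuous (K := 2)
    apply LipschitzWith.of_dist_le_mul
    intro a b
    set za := e.symm a
    set zb := e.symm b
    have ha : F za = a := e.apply_symm_apply a
    have hb : F zb = b := e.apply_symm_apply b
    have ha' : ω (za : ℂ) = (a : ℂ) := by rw [← ha]
    have hb' : ω (zb : ℂ) = (b : ℂ) := by rw [← hb]
    have := norm_lower hdiff hre hcont za.2 zb.2
    rw [ha', hb'] at this
    calc dist (e.symm a) (e.symm b) = ‖(za : ℂ) - (zb : ℂ)‖ := by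
          rw [Subtype.dist_eq, Complex.dist_eq]
      _ ≤ 2 * ‖(a:ℂ) - (b:ℂ)‖ := this
      _ = 2 * dist a b := by rw [Subtype.dist_eq, Complex.dist_eq]
  exact ⟨⟨e, hcontF, hcontInv⟩, fun z => rfl⟩

end Key

section PartIV
variable {ν : Measure ℝ} [IsFiniteMeasure ν]
/-- The "bad set": real points of the support, viewed in `ℂ`. -/
def bad (ν : Measure ℝ) : Set ℂ := {z : ℂ | z.im = 0 ∧ z.re ∈ msupp ν}

lemma isClosed_msupp (ν : Measure ℝ) : IsClosed (msupp ν) := by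
  rw [← isOpen_compl_iff]
  rw [isOpen_iff_mem_nhds]
  intro x hx
  simp only [mem_compl_iff, msupp, mem_setOf_eq, not_forall] at hx
  obtain ⟨ε, hε, hxε⟩ := hx
  have hxε' : ν (Set.Ioo (x - ε) (x + ε)) = 0 := by
    by_contra hc
    exact hxε (lt_of_le_of_ne (zero_le) (Ne.symm hc))
  rw [Metric.mem_nhds_iff]
  refine ⟨ε/2, by linarith, fun y hy => ?_⟩
  simp only [mem_compl_iff, msupp, mem_setOf_eq, not_forall]
  refine ⟨ε/2, by linarith, ?_⟩
  have hsub : Set.Ioo (y - ε/2) (y + ε/2) ⊆ Set.Ioo (x - ε) (x + ε) := by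
    have := abs_lt.1 (by simpa [Real.dist_eq] using hy)
    intro u hu
    simp only [mem_Ioo] at hu ⊢
    constructor <;> linarith [hu.1, hu.2]
  have hy0 : ν (Set.Ioo (y - ε/2) (y + ε/2)) = 0 := measure_mono_null hsub hxε'
  simp [hy0]

lemma ae_mem_msupp (ν : Measure ℝ) [IsFiniteMeasure ν] : ∀ᵐ x ∂ν, x ∈ msupp ν := by
  rw [ae_iff]
  have : {x | ¬ x ∈ msupp ν} = (msupp ν)ᶜ := rfl
  rw [this]
  apply measure_null_of_locally_null
  intro x hx
  simp only [mem_compl_iff, msupp, mem_setOf_eq, not_forall] at hx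
  obtain ⟨ε, hε, hxε⟩ := hx
  have hxε' : ν (Set.Ioo (x - ε) (x + ε)) = 0 := by
    by_contra hc
    exact hxε (lt_of_le_of_ne (zero_le) (Ne.symm hc))
  exact ⟨Set.Ioo (x - ε) (x + ε),
    mem_nhdsWithin_of_mem_nhds (Ioo_mem_nhds (by linarith) (by linarith)), hxε'⟩

lemma isClosed_bad (ν : Measure ℝ) : IsClosed (bad ν) := by
  have : bad ν = (Complex.im ⁻¹' {0}) ∩ (Complex.re ⁻¹' msupp ν) := rfl
  rw [this]
  exact (isClosed_singleton.preimage Complex.continuous_im).inter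
    ((isClosed_msupp ν).preimage Complex.continuous_re)

lemma mem_bad_ofReal {x : ℝ} (hx : x ∈ msupp ν) : ((x:ℝ):ℂ) ∈ bad ν := by
  constructor <;> simp [hx]

variable {ν : Measure ℝ} [IsFiniteMeasure ν]

/-- Analyticity of the Stieltjes transform away from the (real) support. -/
lemma stT_analyticAt {w : ℂ} (hw : w ∉ bad ν) : AnalyticAt ℂ (stT ν) w := by
  have hopen : IsOpen (bad ν)ᶜ := (isClosed_bad ν).isOpen_compl
  obtain ⟨r, hr, hball⟩ := Metric.isOpen_iff.1 hopen w hw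
  have hdiff : DifferentiableOn ℂ (stT ν) (ball w (r/2)) := by
    intro z hz
    have hz' : ∀ᵐ (x : ℝ) ∂ν, r/2 ≤ ‖(x:ℂ) - z‖ := by
      filter_upwards [ae_mem_msupp ν] with x hx
      have hxbad : ((x:ℝ):ℂ) ∈ bad ν := mem_bad_ofReal hx
      have hxout : ((x:ℝ):ℂ) ∉ ball w r := fun hc => (hball hc) hxbad
      have h1 : r ≤ ‖(x:ℂ) - w‖ := by
        rw [mem_ball, Complex.dist_eq] at hxout
        push_neg at hxout
        simpa using hxout
      have h2 : ‖z - w‖ < r/2 := by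
        rw [mem_ball, Complex.dist_eq] at hz
        simpa using hz
      have := norm_sub_norm_le ((x:ℂ) - w) (z - w)
      have h3 : ‖((x:ℂ) - w) - (z - w)‖ = ‖(x:ℂ) - z‖ := by ring_nf
      rw [h3] at this
      linarith
    exact (stT_hasDerivAt (by linarith) hz').differentiableAt.differentiableWithinAt
  exact hdiff.analyticAt (Metric.ball_mem_nhds w (by linarith))


lemma UHP_zfun {w : ℂ} (hw : w ∈ CUHP) {η : ℝ} (hη : 0 < η) : w + (η:ℂ) * Complex.I ∈ UHP := by
  show 0 < (w + (η:ℂ) * Complex.I).im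
  simp only [Complex.add_im, Complex.mul_im, Complex.ofReal_re, Complex.I_im,
    Complex.ofReal_im, Complex.I_re, mul_zero, mul_one, zero_mul, add_zero]
  have := hw.out; linarith

lemma tendsto_zfun (w : ℂ) : Tendsto (fun η : ℝ => w + (η:ℂ) * Complex.I) (𝓝[>] 0) (𝓝 w) := by
  have : Continuous (fun η : ℝ => w + (η:ℂ) * Complex.I) := by continuity
  have h := this.tendsto (0:ℝ)
  simp only [Complex.ofReal_zero, zero_mul, add_zero] at h
  exact h.mono_left nhdsWithin_le_nhds

lemma tendsto_omega_zfun {ω : ℂ → ℂ} (hcont : ContinuousOn ω CUHP) {w : ℂ} (hw : w ∈ CUHP) :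
    Tendsto (fun η : ℝ => ω (w + (η:ℂ) * Complex.I)) (𝓝[>] 0) (𝓝 (ω w)) := by
  apply (hcont w hw).tendsto.comp
  rw [tendsto_nhdsWithin_iff]
  refine ⟨tendsto_zfun w, ?_⟩
  filter_upwards [self_mem_nhdsWithin] with η hη
  exact le_of_lt (UHP_zfun hw hη).out

lemma tcast_ne {t : ℝ} (ht : 1 < t) : ((t:ℂ) - 1) ≠ 0 := by
  intro h
  have := congrArg Complex.re h
  simp at this
  linarith

lemma tcast_ne' {t : ℝ} (ht : 1 < t) : (t:ℂ) ≠ 0 := by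
  intro h
  have := congrArg Complex.re h
  simp at this
  linarith

/-- The Stieltjes transform of `μ^{⊞t}` does not vanish on `CUHP` off the support. -/
lemma stT_ne_zero_off_bad {μ μt : Measure ℝ} [IsProbabilityMeasure μ] [IsProbabilityMeasure μt]
    {t : ℝ} (ht : 1 < t) {ω : ℂ → ℂ} (hω : IsSubordT μ t ω) (hμt : IsFreePow μ ω μt)
    {w : ℂ} (hw : w ∈ CUHP) (hwb : w ∉ bad μt) : stT μt w ≠ 0 := by
  rcases lt_or_eq_of_le hw.out with him | him
  · exact stT_ne_zero him
  · intro h0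
    set zf : ℝ → ℂ := fun η => w + (η:ℂ) * Complex.I with hzf
    have hzUHP : ∀ η : ℝ, 0 < η → zf η ∈ UHP := fun η hη => UHP_zfun hw hη
    have hm : Tendsto (fun η => stT μt (zf η)) (𝓝[>] 0) (𝓝 0) := by
      rw [← h0]
      exact ((stT_analyticAt hwb).continuousAt.tendsto).comp (tendsto_zfun w)
    have hωt := tendsto_omega_zfun hω.cont hw
    have hinv_eq : ∀ᶠ η : ℝ in 𝓝[>] 0,
        (stT μt (zf η))⁻¹ = (zf η - (t:ℂ) * ω (zf η)) / ((t:ℂ) - 1) := by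
      filter_upwards [self_mem_nhdsWithin] with η hη
      have hz := hzUHP η hη
      have heqn := hω.eqn (zf η) hz
      have hst := hμt.2 (zf η) hz
      have hne := stT_ne_zero (ν := μt) hz
      unfold nrT at heqn
      rw [← hst] at heqn
      rw [eq_div_iff (tcast_ne ht)]
      field_simp at heqn ⊢
      simp only [hzf] at heqn ⊢
      linear_combination heqn
    have htinv : Tendsto (fun η => (stT μt (zf η))⁻¹) (𝓝[>] 0)
        (𝓝 ((w - (t:ℂ) * ω w) / ((t:ℂ) - 1))) := by
      apply Tendsto.congr' (hinv_eq.mono fun η h => h.symm)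
      exact (((tendsto_zfun w).sub (hωt.const_mul _)).div_const _)
    have hprod : Tendsto (fun η => stT μt (zf η) * (stT μt (zf η))⁻¹) (𝓝[>] 0) (𝓝 0) := by
      have := hm.mul htinv
      simpa using this
    have hone : (fun η : ℝ => stT μt (zf η) * (stT μt (zf η))⁻¹) =ᶠ[𝓝[>] 0] fun _ => (1:ℂ) := by
      filter_upwards [self_mem_nhdsWithin] with η hη
      exact mul_inv_cancel₀ (stT_ne_zero (hzUHP η hη))
    have : Tendsto (fun _ : ℝ => (1:ℂ)) (𝓝[>] 0) (𝓝 0) := hprod.congr' hone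
    have h1 := tendsto_nhds_unique this tendsto_const_nhds
    exact one_ne_zero h1.symm

/-- Statement (iv). -/
lemma part_iv {μ μt : Measure ℝ} [IsProbabilityMeasure μ] [IsProbabilityMeasure μt]
    {t : ℝ} (ht : 1 < t) {ω : ℂ → ℂ} (hω : IsSubordT μ t ω) (hμt : IsFreePow μ ω μt)
    (hre : ∀ z ∈ UHP, (1:ℝ)/2 ≤ (deriv ω z).re) :
    ∃ g : ℂ → ℂ,
      (∀ w ∈ CUHP \ bad μt, AnalyticAt ℂ g w) ∧
      Set.EqOn g ω (CUHP \ bad μt) ∧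
      Set.InjOn g (CUHP \ bad μt) := by
  set g : ℂ → ℂ := fun z => (z + ((t:ℂ) - 1) * nrT μt z) / (t:ℂ) with hg
  have hganal : ∀ w ∈ CUHP \ bad μt, AnalyticAt ℂ g w := by
    rintro w ⟨hw, hwb⟩
    have h1 : AnalyticAt ℂ (stT μt) w := stT_analyticAt hwb
    have h2 : stT μt w ≠ 0 := stT_ne_zero_off_bad ht hω hμt hw hwb
    have h3 : AnalyticAt ℂ (nrT μt) w := ((h1.inv h2).neg)
    exact ((analyticAt_id.add (analyticAt_const.mul h3)).div analyticAt_const (tcast_ne' ht))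
  have hEqUHP : ∀ z ∈ UHP, g z = ω z := by
    intro z hz
    have heqn := hω.eqn z hz
    have hst := hμt.2 z hz
    unfold nrT at heqn
    rw [← hst] at heqn
    rw [hg]
    rw [div_eq_iff (tcast_ne' ht)]
    unfold nrT
    linear_combination -heqn
  have hEq : Set.EqOn g ω (CUHP \ bad μt) := by
    rintro w ⟨hw, hwb⟩
    rcases lt_or_eq_of_le hw.out with him | him
    · exact hEqUHP w him
    · -- boundary point: take limits
      have hgc : Tendsto (fun η : ℝ => g (w + (η:ℂ) * Complex.I)) (𝓝[>] 0) (𝓝 (g w)) :=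
        ((hganal w ⟨hw, hwb⟩).continuousAt.tendsto).comp (tendsto_zfun w)
      have hωc := tendsto_omega_zfun hω.cont hw
      have heq : (fun η : ℝ => g (w + (η:ℂ) * Complex.I))
          =ᶠ[𝓝[>] 0] (fun η : ℝ => ω (w + (η:ℂ) * Complex.I)) := by
        filter_upwards [self_mem_nhdsWithin] with η hη
        exact hEqUHP _ (UHP_zfun hw hη)
      exact tendsto_nhds_unique (hgc.congr' heq) hωc
  refine ⟨g, hganal, hEq, ?_⟩
  intro a ha b hb hab
  have hinj := injOn_CUHP hω.diff hre hω.cont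
  apply hinj ha.1 hb.1
  rw [← hEq ha, ← hEq hb]
  exact hab


end PartIV

end SubAux

/-- Monotonicity and injectivity properties of `ω_t`. -/
theorem subordination_homeomorphism
    (μ : Measure ℝ) (nac npp nppout : ℕ)
    (Em Ep : Fin nac → ℝ) (atom : Fin npp → ℝ) (ρ : ℝ → ℝ)
    (hμ : Assumption1 μ nac npp nppout Em Ep atom ρ)
    (t : ℝ) (ht : 1 < t) (ω : ℂ → ℂ) (hω : IsSubordT μ t ω)
    (μt : Measure ℝ) (hμt : IsFreePow μ ω μt) :
    -- (i) Re ω_t'(z) ≥ 1/2 on ℂ⁺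
    (∀ z ∈ UHP, (1 : ℝ) / 2 ≤ (deriv ω z).re) ∧
    -- (ii) E ↦ Re ω_t(E) is strictly increasing on ℝ
    StrictMono (fun E : ℝ => (ω (E : ℂ)).re) ∧
    -- (iii) ω_t is a homeomorphism from ℂ⁺ ∪ ℝ onto its image
    (∃ e : ↥CUHP ≃ₜ ↥(ω '' CUHP), ∀ z : ↥CUHP, (e z : ℂ) = ω (z : ℂ)) ∧
    -- (iv) ω_t is biholomorphic on (ℂ⁺ ∪ ℝ) \ supp(μ^{⊞t}): it extends analytically
    -- through every real point outside supp(μ^{⊞t}) and is injective there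
    (∃ g : ℂ → ℂ,
      (∀ w ∈ CUHP \ {z : ℂ | z.im = 0 ∧ z.re ∈ msupp μt}, AnalyticAt ℂ g w) ∧
      Set.EqOn g ω (CUHP \ {z : ℂ | z.im = 0 ∧ z.re ∈ msupp μt}) ∧
      Set.InjOn g (CUHP \ {z : ℂ | z.im = 0 ∧ z.re ∈ msupp μt})) := by
  haveI hprob : IsProbabilityMeasure μ := hμ.prob
  haveI hprobt : IsProbabilityMeasure μt := hμt.1
  have hre : ∀ z ∈ UHP, (1 : ℝ) / 2 ≤ (deriv ω z).re := fun z hz =>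
    SubAux.re_deriv_omega hω ht hz
  refine ⟨hre, SubAux.strictMono_re hω.diff hre hω.cont,
    SubAux.homeo_exists hω.diff hre hω.cont, ?_⟩
  exact SubAux.part_iv ht hω hμt hre
end

section
/- Let μ satisfy Assumption 1 and let t > 1. Then: (i) F_μ extends analytically to a neighborhood of every point of ω_t(ℂ⁺ ∪ ℝ) that is not an atom of μ lying in supp(μ_ac); (ii) the Julia–Carathéodory derivative of F_μ exists at every atom E of μ and equals 1/μ({E}): for every sequence (z_n) ⊂ ℂ⁺ converging non-tangentially to E, F_μ(z_n)/(z_n − E) → 1/μ({E}); (iii) if E ∈ ℝ is such that F_μ is analytic at ω_t(E), then the non-tangential limit of (ω_t(z) − ω_t(E))/(z − E) as z → E is infinite if and only if F_μ'(ω_t(E)) = t/(t−1). -/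
open MeasureTheory Topology Filter Set

section AuxBasic

variable {μ : Measure ℝ}

lemma aesm_inv (u : ℂ) : AEStronglyMeasurable (fun x : ℝ => ((x:ℂ) - u)⁻¹) μ :=
  ((Complex.measurable_ofReal.sub_const u).inv).aestronglyMeasurable

lemma aesm_nsq (u : ℂ) :
    AEStronglyMeasurable (fun x : ℝ => (Complex.normSq ((x:ℂ) - u))⁻¹) μ :=
  ((Complex.continuous_normSq.measurable.comp (Complex.measurable_ofReal.sub_const u)).inv).aestronglyMeasurable

lemma norm_inv_le {u : ℂ} {x : ℝ} {δ : ℝ} (hδ : 0 < δ) (h : δ ≤ dist ((x:ℝ):ℂ) u) :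
    ‖((x:ℂ) - u)⁻¹‖ ≤ δ⁻¹ := by
  rw [norm_inv]
  exact inv_anti₀ hδ (by rwa [← dist_eq_norm] )

lemma im_le_dist (u : ℂ) (x : ℝ) : |u.im| ≤ dist ((x:ℝ):ℂ) u := by
  rw [dist_eq_norm]
  have h := Complex.abs_im_le_norm ((x:ℂ) - u)
  simpa [Complex.sub_im] using h

lemma integrable_inv [IsFiniteMeasure μ] {u : ℂ} {δ : ℝ} (hδ : 0 < δ)
    (h : ∀ᵐ x ∂μ, δ ≤ dist ((x:ℝ):ℂ) u) :
    Integrable (fun x : ℝ => ((x:ℂ) - u)⁻¹) μ := by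
  refine Integrable.mono' (integrable_const δ⁻¹) (aesm_inv u) ?_
  filter_upwards [h] with x hx
  exact norm_inv_le hδ hx

lemma integrable_inv_uhp [IsFiniteMeasure μ] {u : ℂ} (hu : 0 < u.im) :
    Integrable (fun x : ℝ => ((x:ℂ) - u)⁻¹) μ :=
  integrable_inv hu (ae_of_all _ fun x => by
    simpa [abs_of_pos hu] using im_le_dist u x)

lemma nsq_inv_le {u : ℂ} {x : ℝ} {δ : ℝ} (hδ : 0 < δ) (h : δ ≤ dist ((x:ℝ):ℂ) u) :
    (Complex.normSq ((x:ℂ) - u))⁻¹ ≤ (δ^2)⁻¹ := by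
  have h1 : δ^2 ≤ Complex.normSq ((x:ℂ) - u) := by
    rw [Complex.normSq_eq_norm_sq]
    have : δ ≤ ‖(x:ℂ) - u‖ := by rwa [dist_eq_norm] at h
    nlinarith
  exact inv_anti₀ (pow_pos hδ 2) h1

lemma integrable_nsq_inv [IsFiniteMeasure μ] {u : ℂ} {δ : ℝ} (hδ : 0 < δ)
    (h : ∀ᵐ x ∂μ, δ ≤ dist ((x:ℝ):ℂ) u) :
    Integrable (fun x : ℝ => (Complex.normSq ((x:ℂ) - u))⁻¹) μ := by
  refine Integrable.mono' (integrable_const ((δ^2)⁻¹)) (aesm_nsq u) ?_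
  filter_upwards [h] with x hx
  rw [Real.norm_eq_abs, abs_of_nonneg (inv_nonneg.mpr (Complex.normSq_nonneg _))]
  exact nsq_inv_le hδ hx

lemma integrable_nsq_inv_uhp [IsFiniteMeasure μ] {u : ℂ} (hu : 0 < u.im) :
    Integrable (fun x : ℝ => (Complex.normSq ((x:ℂ) - u))⁻¹) μ :=
  integrable_nsq_inv hu (ae_of_all _ fun x => by
    simpa [abs_of_pos hu] using im_le_dist u x)

lemma inv_im_eq (u : ℂ) (x : ℝ) :
    (((x:ℂ) - u)⁻¹).im = u.im * (Complex.normSq ((x:ℂ) - u))⁻¹ := by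
  rw [Complex.inv_im]
  simp [Complex.sub_im, neg_div, div_eq_mul_inv]

lemma stT_im [IsFiniteMeasure μ] {u : ℂ} (hu : 0 < u.im) :
    (stT μ u).im = u.im * Ifun μ u := by
  have h1 := (ContinuousLinearMap.integral_comp_comm Complex.imCLM
    (integrable_inv_uhp (μ := μ) hu)).symm
  simp only [Complex.imCLM_apply] at h1
  rw [stT, h1, Ifun, ← integral_const_mul]
  exact integral_congr_ae (ae_of_all _ fun x => inv_im_eq u x)

lemma Ifun_nonneg (u : ℂ) : 0 ≤ Ifun μ u :=
  integral_nonneg fun x => inv_nonneg.mpr (Complex.normSq_nonneg _)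

lemma Ifun_pos [IsProbabilityMeasure μ] {u : ℂ} (hu : 0 < u.im) : 0 < Ifun μ u := by
  rw [Ifun]
  rw [integral_pos_iff_support_of_nonneg_ae (ae_of_all _ fun x => inv_nonneg.mpr (Complex.normSq_nonneg _))
    (integrable_nsq_inv_uhp hu)]
  have : (Function.support fun x : ℝ => (Complex.normSq ((x:ℂ) - u))⁻¹) = Set.univ := by
    ext x
    simp only [Function.mem_support, Set.mem_univ, iff_true]
    have hne : ((x:ℂ) - u) ≠ 0 := fun h => by
      have h2 := congrArg Complex.im h
      simp only [Complex.sub_im, Complex.ofReal_im, Complex.zero_im, zero_sub, neg_eq_zero] at h2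
      exact hu.ne' h2
    exact (inv_pos.mpr (Complex.normSq_pos.mpr hne)).ne'
  rw [this]
  simp

lemma stT_ne_zero [IsProbabilityMeasure μ] {u : ℂ} (hu : 0 < u.im) : stT μ u ≠ 0 := by
  intro h
  have h2 := stT_im (μ := μ) hu
  rw [h] at h2
  simp only [Complex.zero_im] at h2
  nlinarith [Ifun_pos (μ := μ) hu]

lemma nrT_im [IsProbabilityMeasure μ] {u : ℂ} (hu : 0 < u.im) :
    (nrT μ u).im = u.im * Ifun μ u / Complex.normSq (stT μ u) := by
  rw [nrT, Complex.neg_im, Complex.inv_im, ← stT_im hu]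
  ring

end AuxBasic

section AuxAnalytic

variable {μ : Measure ℝ}

lemma stT_hasDerivAt [IsFiniteMeasure μ] {u₀ : ℂ} {δ : ℝ} (hδ : 0 < δ)
    (hae : ∀ᵐ x ∂μ, δ ≤ dist ((x:ℝ):ℂ) u₀) :
    HasDerivAt (stT μ) (∫ x, ((((x:ℂ) - u₀)^2)⁻¹) ∂μ) u₀ := by
  have half : 0 < δ/2 := by linarith
  have key := hasDerivAt_integral_of_dominated_loc_of_lip
    (F := fun (u : ℂ) (x : ℝ) => ((x:ℂ) - u)⁻¹)
    (F' := fun x : ℝ => (((x:ℂ) - u₀)^2)⁻¹)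
    (x₀ := u₀) (bound := fun _ => (δ/2)⁻¹ * (δ/2)⁻¹) (s := Metric.ball u₀ (δ/2)) (Metric.ball_mem_nhds u₀ half)
    (Filter.Eventually.of_forall fun u => aesm_inv u)
    (integrable_inv hδ hae)
    (((((Complex.measurable_ofReal.sub_const u₀).pow_const 2).inv)).aestronglyMeasurable)
    ?_ (integrable_const _) ?_
  · exact key.2
  · -- Lipschitz
    filter_upwards [hae] with x hx
    rw [lipschitzOnWith_iff_dist_le_mul]
    intro u hu v hv
    have hxu : δ/2 ≤ dist ((x:ℝ):ℂ) u := by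
      have := dist_triangle ((x:ℝ):ℂ) u u₀
      rw [Metric.mem_ball] at hu
      linarith [hu.le, this, hx, dist_comm u u₀ ▸ hu.le]
    have hxv : δ/2 ≤ dist ((x:ℝ):ℂ) v := by
      have := dist_triangle ((x:ℝ):ℂ) v u₀
      rw [Metric.mem_ball] at hv
      linarith [hv.le, this, hx, dist_comm v u₀ ▸ hv.le]
    have hxu0 : ((x:ℂ) - u) ≠ 0 := by
      intro h; rw [dist_eq_norm, h] at hxu; simp at hxu; linarith
    have hxv0 : ((x:ℂ) - v) ≠ 0 := by
      intro h; rw [dist_eq_norm, h] at hxv; simp at hxv; linarith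
    have hid : ((x:ℂ) - u)⁻¹ - ((x:ℂ) - v)⁻¹ = (u - v) * (((x:ℂ) - u)⁻¹ * ((x:ℂ) - v)⁻¹) := by
      field_simp
      ring
    rw [dist_eq_norm, hid, dist_eq_norm]
    have h1 : ‖((x:ℂ) - u)⁻¹‖ ≤ (δ/2)⁻¹ := norm_inv_le half hxu
    have h2 : ‖((x:ℂ) - v)⁻¹‖ ≤ (δ/2)⁻¹ := norm_inv_le half hxv
    rw [norm_mul, norm_mul]
    have hcoe : ((Real.nnabs ((δ/2)⁻¹ * (δ/2)⁻¹)) : ℝ) = (δ/2)⁻¹ * (δ/2)⁻¹ := by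
      rw [Real.coe_nnabs, abs_of_nonneg (by positivity)]
    rw [hcoe]
    calc ‖u - v‖ * (‖((x:ℂ) - u)⁻¹‖ * ‖((x:ℂ) - v)⁻¹‖)
        ≤ ‖u - v‖ * ((δ/2)⁻¹ * (δ/2)⁻¹) := by
          apply mul_le_mul_of_nonneg_left _ (norm_nonneg _)
          exact mul_le_mul h1 h2 (norm_nonneg _) (by positivity)
      _ = (δ/2)⁻¹ * (δ/2)⁻¹ * ‖u - v‖ := by ring
  · -- pointwise derivative
    filter_upwards [hae] with x hx
    have hxu0 : ((x:ℂ) - u₀) ≠ 0 := by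
      intro h; rw [dist_eq_norm, h] at hx; simp at hx; linarith
    have hb : HasDerivAt (fun u : ℂ => (x:ℂ) - u) (-1) u₀ := (hasDerivAt_id u₀).const_sub _
    have := hb.inv hxu0
    convert this using 1
    · rfl
    · rfl
    · ring

lemma stT_analyticAt [IsFiniteMeasure μ] {u₀ : ℂ} {δ : ℝ} (hδ : 0 < δ)
    (hae : ∀ᵐ x ∂μ, δ ≤ dist ((x:ℝ):ℂ) u₀) :
    AnalyticAt ℂ (stT μ) u₀ := by
  have hdiff : DifferentiableOn ℂ (stT μ) (Metric.ball u₀ (δ/2)) := by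
    intro u hu
    rw [Metric.mem_ball] at hu
    have h2 : 0 < δ - dist u u₀ := by linarith
    have hae' : ∀ᵐ x ∂μ, δ - dist u u₀ ≤ dist ((x:ℝ):ℂ) u := by
      filter_upwards [hae] with x hx
      have := dist_triangle ((x:ℝ):ℂ) u u₀
      linarith
    exact (stT_hasDerivAt h2 hae').differentiableAt.differentiableWithinAt
  exact hdiff.analyticAt (Metric.ball_mem_nhds u₀ (by linarith))

lemma stT_analyticAt_uhp [IsFiniteMeasure μ] {u : ℂ} (hu : 0 < u.im) :
    AnalyticAt ℂ (stT μ) u :=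
  stT_analyticAt hu (ae_of_all _ fun x => by simpa [abs_of_pos hu] using im_le_dist u x)

lemma nrT_analyticAt_uhp [IsProbabilityMeasure μ] {u : ℂ} (hu : 0 < u.im) :
    AnalyticAt ℂ (nrT μ) u := by
  have := ((stT_analyticAt_uhp (μ := μ) hu).inv (stT_ne_zero hu)).neg
  exact this

end AuxAnalytic

section AuxIneq

variable {μ : Measure ℝ}

lemma key_ineq [IsProbabilityMeasure μ] {t : ℝ} (ht : 1 < t) {z w : ℂ}
    (hz : 0 < z.im) (hw : 0 < w.im)
    (heq : (t:ℂ) * w - z = ((t:ℂ) - 1) * nrT μ w) :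
    Ifun μ w * (t - 1) ≤ t * Complex.normSq (stT μ w) := by
  have h1 : t * w.im - z.im = (t-1) * ((nrT μ w).im) := by
    have h0 := congrArg Complex.im heq
    simpa [Complex.sub_im, Complex.mul_im, Complex.ofReal_re, Complex.ofReal_im,
      Complex.one_im, Complex.one_re] using h0
  rw [nrT_im hw] at h1
  have hns : 0 < Complex.normSq (stT μ w) :=
    Complex.normSq_pos.mpr (stT_ne_zero hw)
  have h2 : (t-1) * (w.im * Ifun μ w) = (t * w.im - z.im) * Complex.normSq (stT μ w) := by
    field_simp at h1
    linarith [h1]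
  nlinarith [mul_pos hw hns, Ifun_nonneg (μ := μ) w, hz, hns, hw]

lemma cs_bound [IsProbabilityMeasure μ] {u : ℂ} (hu : 0 < u.im) {W R : ℝ} (hR : 0 < R)
    (hd : dist u ((W:ℝ):ℂ) ≤ R/2) :
    ‖stT μ u‖ ≤ Real.sqrt ((μ (Metric.ball W R)).toReal * Ifun μ u) + 2/R := by
  set B : Set ℝ := Metric.ball W R with hB
  have hBm : MeasurableSet B := measurableSet_ball
  have hi : Integrable (fun x : ℝ => ‖((x:ℂ) - u)⁻¹‖) μ := (integrable_inv_uhp hu).norm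
  have step1 : ‖stT μ u‖ ≤ ∫ x, ‖((x:ℂ) - u)⁻¹‖ ∂μ := norm_integral_le_integral_norm _
  have hsplit : ∫ x, ‖((x:ℂ) - u)⁻¹‖ ∂μ
      = (∫ x in B, ‖((x:ℂ) - u)⁻¹‖ ∂μ) + ∫ x in Bᶜ, ‖((x:ℂ) - u)⁻¹‖ ∂μ :=
    (integral_add_compl hBm hi).symm
  -- far bound
  have hfar : ∫ x in Bᶜ, ‖((x:ℂ) - u)⁻¹‖ ∂μ ≤ 2/R := by
    have hbd : ∀ᵐ x : ℝ ∂(μ.restrict Bᶜ), ‖((x:ℂ) - u)⁻¹‖ ≤ 2/R := by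
      rw [ae_restrict_iff' hBm.compl]
      refine ae_of_all _ fun x hx => ?_
      have hxW : R ≤ dist ((x:ℝ):ℂ) ((W:ℝ):ℂ) := by
        rw [Complex.dist_eq, ← Complex.ofReal_sub, Complex.norm_real, Real.norm_eq_abs]
        have : ¬ |x - W| < R := by
          simpa [hB, Metric.mem_ball, Real.dist_eq] using hx
        linarith [not_lt.mp this]
      have hxu : R/2 ≤ dist ((x:ℝ):ℂ) u := by
        have := dist_triangle ((x:ℝ):ℂ) u ((W:ℝ):ℂ)
        have h2 := dist_comm u ((W:ℝ):ℂ)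
        linarith [hd, this]
      have := norm_inv_le (by linarith : (0:ℝ) < R/2) hxu
      calc ‖((x:ℂ) - u)⁻¹‖ ≤ (R/2)⁻¹ := this
        _ = 2/R := by field_simp
    calc ∫ x in Bᶜ, ‖((x:ℂ) - u)⁻¹‖ ∂μ ≤ ∫ _x in Bᶜ, 2/R ∂μ :=
          integral_mono_ae (hi.restrict) (integrable_const _) hbd
      _ = (μ Bᶜ).toReal * (2/R) := by rw [integral_const]; simp [smul_eq_mul, Measure.real]
      _ ≤ 1 * (2/R) := by
          have h2 : μ Bᶜ ≤ 1 := le_trans (measure_mono (Set.subset_univ _)) (le_of_eq measure_univ)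
          have h3 := ENNReal.toReal_mono (ENNReal.one_ne_top) h2
          have h4 : (μ Bᶜ).toReal ≤ 1 := by simpa using h3
          apply mul_le_mul_of_nonneg_right h4 (by positivity)
      _ = 2/R := one_mul _
  -- near bound (Cauchy-Schwarz)
  have hnear : ∫ x in B, ‖((x:ℂ) - u)⁻¹‖ ∂μ
      ≤ Real.sqrt ((μ B).toReal * Ifun μ u) := by
    have hpq : Real.HolderConjugate 2 2 := Real.HolderConjugate.two_two
    have hmem : MemLp (fun x : ℝ => ‖((x:ℂ) - u)⁻¹‖) (ENNReal.ofReal 2) (μ.restrict B) := by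
      apply MemLp.of_bound (aesm_inv u).norm.restrict (u.im)⁻¹
      refine ae_of_all _ fun x => ?_
      rw [norm_norm]
      exact norm_inv_le hu (by simpa [abs_of_pos hu] using im_le_dist u x)
    have hone : MemLp (fun _ : ℝ => (1:ℝ)) (ENNReal.ofReal 2) (μ.restrict B) := memLp_const 1
    have hcs := integral_mul_le_Lp_mul_Lq_of_nonneg (μ := μ.restrict B) hpq
      (f := fun x : ℝ => ‖((x:ℂ) - u)⁻¹‖) (g := fun _ => (1:ℝ))
      (ae_of_all _ fun x => norm_nonneg _) (ae_of_all _ fun _ => zero_le_one) hmem hone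
    simp only [mul_one] at hcs
    have e1 : ∫ x in B, ‖((x:ℂ) - u)⁻¹‖ ^ (2:ℝ) ∂μ ≤ Ifun μ u := by
      have heq2 : ∀ x : ℝ, ‖((x:ℂ) - u)⁻¹‖ ^ (2:ℝ) = (Complex.normSq ((x:ℂ) - u))⁻¹ := by
        intro x
        rw [show (2:ℝ) = ((2:ℕ):ℝ) by norm_num, Real.rpow_natCast]
        rw [norm_inv, inv_pow, ← Complex.normSq_eq_norm_sq]
      rw [show (fun x : ℝ => ‖((x:ℂ) - u)⁻¹‖ ^ (2:ℝ)) = fun x : ℝ => (Complex.normSq ((x:ℂ) - u))⁻¹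
        from funext heq2]
      exact integral_mono_measure Measure.restrict_le_self
        (ae_of_all _ fun x => inv_nonneg.mpr (Complex.normSq_nonneg _))
        (integrable_nsq_inv_uhp hu)
    have e2 : ∫ _x in B, (1:ℝ) ^ (2:ℝ) ∂μ = (μ B).toReal := by
      simp [Real.one_rpow, Measure.real]
    rw [e2] at hcs
    have hInn : (0:ℝ) ≤ ∫ x in B, ‖((x:ℂ) - u)⁻¹‖ ^ (2:ℝ) ∂μ :=
      integral_nonneg fun x => Real.rpow_nonneg (norm_nonneg _) _
    calc ∫ x in B, ‖((x:ℂ) - u)⁻¹‖ ∂μ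
        ≤ (∫ x in B, ‖((x:ℂ) - u)⁻¹‖ ^ (2:ℝ) ∂μ) ^ (1/2:ℝ) * ((μ B).toReal) ^ (1/2:ℝ) := hcs
      _ ≤ (Ifun μ u) ^ (1/2:ℝ) * ((μ B).toReal) ^ (1/2:ℝ) := by
          apply mul_le_mul_of_nonneg_right _ (Real.rpow_nonneg ENNReal.toReal_nonneg _)
          exact Real.rpow_le_rpow hInn e1 (by norm_num)
      _ = Real.sqrt ((μ B).toReal * Ifun μ u) := by
          rw [Real.sqrt_eq_rpow, Real.mul_rpow ENNReal.toReal_nonneg (Ifun_nonneg _)]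
          ring
  linarith [step1, hsplit, hfar, hnear]

end AuxIneq


section AuxPartTwo

variable {μ : Measure ℝ}

lemma part_two [IsProbabilityMeasure μ] (E : ℝ) (hE : μ {E} ≠ 0) (zs : ℕ → ℂ)
    (hzs : NonTangentialSeq zs E) :
    Tendsto (fun n => nrT μ (zs n) / (zs n - (E : ℂ))) atTop
      (𝓝 ((((μ {E}).toReal)⁻¹ : ℝ) : ℂ)) := by
  obtain ⟨hmem, htend, C, hC⟩ := hzs
  have him : ∀ n, 0 < (zs n).im := fun n => hmem n
  set a : ℝ := (μ {E}).toReal with ha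
  have ha_pos : 0 < a := ENNReal.toReal_pos hE (measure_ne_top μ _)
  have key : Tendsto (fun n => (zs n - (E:ℂ)) * stT μ (zs n)) atTop (𝓝 (-(a:ℂ))) := by
    have hdct := tendsto_integral_of_dominated_convergence (μ := μ)
      (F := fun (n : ℕ) (x : ℝ) => (zs n - (E:ℂ)) * ((x:ℂ) - zs n)⁻¹)
      (f := Set.indicator {E} (fun _ => (-1 : ℂ)))
      (bound := fun _ => max C 0 + 1)
      (fun n => (aesm_inv (zs n)).const_mul _)
      (integrable_const _) ?_ ?_
    · have heval : ∫ x, Set.indicator {E} (fun _ => (-1:ℂ)) x ∂μ = -(a:ℂ) := by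
        rw [integral_indicator_const (-1 : ℂ) (measurableSet_singleton E)]
        simp [ha, Measure.real]
      rw [heval] at hdct
      refine hdct.congr fun n => ?_
      rw [stT, ← integral_const_mul]
    · -- bound
      intro n
      refine ae_of_all _ fun x => ?_
      have h1 : ‖zs n - (E:ℂ)‖ ≤ (max C 0 + 1) * (zs n).im := by
        have := Complex.norm_le_abs_re_add_abs_im (zs n - (E:ℂ))
        have hre : (zs n - (E:ℂ)).re = (zs n).re - E := by simp
        have him2 : (zs n - (E:ℂ)).im = (zs n).im := by simp
        rw [hre, him2] at this
        have h3 : |(zs n).re - E| ≤ max C 0 * (zs n).im := by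
          calc |(zs n).re - E| ≤ C * (zs n).im := hC n
            _ ≤ max C 0 * (zs n).im := by
                apply mul_le_mul_of_nonneg_right (le_max_left _ _) (him n).le
        have h4 : |(zs n).im| = (zs n).im := abs_of_pos (him n)
        nlinarith [this]
      have h2 : ‖((x:ℂ) - zs n)⁻¹‖ ≤ ((zs n).im)⁻¹ :=
        norm_inv_le (him n) (by simpa [abs_of_pos (him n)] using im_le_dist (zs n) x)
      rw [norm_mul]
      calc ‖zs n - (E:ℂ)‖ * ‖((x:ℂ) - zs n)⁻¹‖
          ≤ ((max C 0 + 1) * (zs n).im) * ((zs n).im)⁻¹ := by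
            exact mul_le_mul h1 h2 (norm_nonneg _) (mul_nonneg (by positivity) (him n).le)
        _ = max C 0 + 1 := by
            rw [mul_assoc, mul_inv_cancel₀ (him n).ne', mul_one]
    · -- pointwise limit
      refine ae_of_all _ fun x => ?_
      by_cases hx : x = E
      · subst hx
        have heq : ∀ n, (zs n - (x:ℂ)) * (((x:ℂ)) - zs n)⁻¹ = -1 := by
          intro n
          have hne : (x:ℂ) - zs n ≠ 0 := by
            intro h
            have := congrArg Complex.im h
            simp only [Complex.sub_im, Complex.ofReal_im, Complex.zero_im, zero_sub,
              neg_eq_zero] at this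
            exact (him n).ne' this
          rw [show zs n - (x:ℂ) = -((x:ℂ) - zs n) by ring, neg_mul, mul_inv_cancel₀ hne]
        rw [show Set.indicator {x} (fun _ => (-1:ℂ)) x = -1 by simp]
        exact tendsto_const_nhds.congr fun n => (heq n).symm
      · have hne : (x:ℂ) - (E:ℂ) ≠ 0 := by
          rw [sub_ne_zero]
          exact_mod_cast hx
        have h1 : Tendsto (fun n => zs n - (E:ℂ)) atTop (𝓝 0) := by
          simpa using htend.sub (tendsto_const_nhds (x := (E:ℂ)))
        have h2 : Tendsto (fun n => ((x:ℂ) - zs n)⁻¹) atTop (𝓝 (((x:ℂ) - (E:ℂ))⁻¹)) :=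
          (tendsto_const_nhds.sub htend).inv₀ hne
        rw [show Set.indicator {E} (fun _ => (-1:ℂ)) x = 0 by simp [hx]]
        simpa using h1.mul h2
  have hA : (-(a:ℂ)) ≠ 0 := by
    simp only [neg_ne_zero]
    exact_mod_cast ha_pos.ne'
  have hfin := (key.inv₀ hA).neg
  have heq : (((a⁻¹ : ℝ)):ℂ) = -(-(a:ℂ))⁻¹ := by
    push_cast
    rw [inv_neg, neg_neg]
  rw [ha] at heq ⊢
  rw [heq]
  refine hfin.congr fun n => ?_
  rw [nrT, div_eq_mul_inv, mul_inv]
  ring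

end AuxPartTwo


section AuxSubord

variable {μ : Measure ℝ} {t : ℝ} {ω : ℂ → ℂ}

noncomputable def zseq (E : ℝ) (n : ℕ) : ℂ := (E:ℂ) + ((((n:ℝ)+1)⁻¹ : ℝ) : ℂ) * Complex.I

lemma zseq_im (E : ℝ) (n : ℕ) : (zseq E n).im = ((n:ℝ)+1)⁻¹ := by
  rw [zseq]
  simp only [Complex.add_im, Complex.ofReal_im, Complex.mul_im, Complex.ofReal_re,
    Complex.I_im, Complex.I_re, mul_one, mul_zero, add_zero, zero_add]

lemma zseq_mem (E : ℝ) (n : ℕ) : zseq E n ∈ UHP := by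
  have h : (0:ℝ) < ((n:ℝ)+1)⁻¹ := by positivity
  show 0 < (zseq E n).im
  rw [zseq_im]; exact h

lemma zseq_tendsto (E : ℝ) : Tendsto (zseq E) atTop (𝓝 (E:ℂ)) := by
  have h0 : Tendsto (fun n : ℕ => ((n:ℝ)+1)⁻¹) atTop (𝓝 0) := by
    simpa [one_div] using tendsto_one_div_add_atTop_nhds_zero_nat (𝕜 := ℝ)
  have h1 : Tendsto (fun n : ℕ => ((((n:ℝ)+1)⁻¹ : ℝ) : ℂ)) atTop (𝓝 ((0:ℝ):ℂ)) :=
    (Complex.continuous_ofReal.tendsto 0).comp h0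
  rw [Complex.ofReal_zero] at h1
  have h2 := (tendsto_const_nhds (x := (E:ℂ))).add (h1.mul_const Complex.I)
  rw [show (E:ℂ) + (0:ℂ) * Complex.I = (E:ℂ) by ring] at h2
  exact h2

lemma zseq_nt (E : ℝ) : NonTangentialSeq (zseq E) E :=
  ⟨zseq_mem E, zseq_tendsto E, 0, fun n => by simp [zseq]⟩

lemma sub_real_ne_zero {z : ℂ} (hz : z ∈ UHP) (E : ℝ) : z - (E:ℂ) ≠ 0 := by
  intro h
  have h2 := congrArg Complex.im h
  simp only [Complex.sub_im, Complex.ofReal_im, Complex.zero_im, sub_zero] at h2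
  exact (hz : 0 < z.im).ne' h2

lemma norm_sub_real_pos {z : ℂ} (hz : z ∈ UHP) (E : ℝ) : 0 < ‖z - (E:ℂ)‖ :=
  norm_pos_iff.mpr (sub_real_ne_zero hz E)

lemma tendsto_omega_of_seq (hω : IsSubordT μ t ω) (E : ℝ) {zs : ℕ → ℂ}
    (hmem : ∀ n, zs n ∈ UHP) (hz : Tendsto zs atTop (𝓝 (E:ℂ))) :
    Tendsto (fun n => ω (zs n)) atTop (𝓝 (ω (E:ℂ))) := by
  have hE : (E:ℂ) ∈ CUHP := by show (0:ℝ) ≤ _; simp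
  have hc := (hω.cont (E:ℂ) hE).tendsto
  apply hc.comp
  apply tendsto_nhdsWithin_of_tendsto_nhds_of_eventually_within _ hz
  exact Filter.Eventually.of_forall fun n => (le_of_lt (hmem n) : (0:ℝ) ≤ (zs n).im)

lemma subord_limit_eqn (hω : IsSubordT μ t ω) (E : ℝ) {g : ℂ → ℂ}
    (hgc : ContinuousAt g (ω (E:ℂ))) (hgU : ∀ z ∈ UHP, g z = nrT μ z) :
    (t:ℂ) * ω (E:ℂ) - (E:ℂ) = ((t:ℂ) - 1) * g (ω (E:ℂ)) := by
  have hu := tendsto_omega_of_seq hω E (zseq_mem E) (zseq_tendsto E)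
  have hL : Tendsto (fun n => (t:ℂ) * ω (zseq E n) - zseq E n) atTop
      (𝓝 ((t:ℂ) * ω (E:ℂ) - (E:ℂ))) := (tendsto_const_nhds.mul hu).sub (zseq_tendsto E)
  have hR : Tendsto (fun n => ((t:ℂ) - 1) * g (ω (zseq E n))) atTop
      (𝓝 (((t:ℂ) - 1) * g (ω (E:ℂ)))) := tendsto_const_nhds.mul (hgc.tendsto.comp hu)
  have heq : ∀ n, (t:ℂ) * ω (zseq E n) - zseq E n = ((t:ℂ) - 1) * g (ω (zseq E n)) := fun n => by
    rw [hω.eqn _ (zseq_mem E n), hgU _ (hω.maps _ (zseq_mem E n))]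
  exact tendsto_nhds_unique (hL.congr heq) hR

lemma tcast_ne (ht : 1 < t) : ((t:ℂ) - 1) ≠ 0 := by
  rw [show ((t:ℂ) - 1) = (((t - 1 : ℝ)):ℂ) by push_cast; ring]
  exact Complex.ofReal_ne_zero.mpr (by linarith)

lemma tcast_norm (ht : 1 < t) : ‖(t:ℂ) - 1‖ = t - 1 := by
  rw [show ((t:ℂ) - 1) = (((t - 1 : ℝ)):ℂ) by push_cast; ring]
  rw [Complex.norm_real, Real.norm_eq_abs, abs_of_pos (by linarith)]

lemma stT_limit_ne [IsProbabilityMeasure μ] (ht : 1 < t)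
    (hω : IsSubordT μ t ω) {E W : ℝ} (hωE : ω (E:ℂ) = ((W:ℝ):ℂ))
    (hcont : ContinuousAt (stT μ) ((W:ℝ):ℂ)) : stT μ ((W:ℝ):ℂ) ≠ 0 := by
  intro h0
  have hu : Tendsto (fun n => ω (zseq E n)) atTop (𝓝 ((W:ℂ))) := by
    have := tendsto_omega_of_seq hω E (zseq_mem E) (zseq_tendsto E)
    rwa [hωE] at this
  have hs : Tendsto (fun n => stT μ (ω (zseq E n))) atTop (𝓝 0) := by
    have := hcont.tendsto.comp hu
    rwa [h0] at this
  have hnorm : Tendsto (fun n => ‖stT μ (ω (zseq E n))‖) atTop (𝓝 0) := by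
    simpa using hs.norm
  have hpos : ∀ n, 0 < ‖stT μ (ω (zseq E n))‖ := fun n =>
    norm_pos_iff.mpr (stT_ne_zero (hω.maps _ (zseq_mem E n)))
  have hinv : Tendsto (fun n => ‖stT μ (ω (zseq E n))‖⁻¹) atTop atTop := by
    apply tendsto_inv_nhdsGT_zero.comp
    apply tendsto_nhdsWithin_of_tendsto_nhds_of_eventually_within _ hnorm
    exact Filter.Eventually.of_forall fun n => hpos n
  have hnr : Tendsto (fun n => nrT μ (ω (zseq E n))) atTop
      (𝓝 (((t:ℂ) * (W:ℂ) - (E:ℂ))/((t:ℂ)-1))) := by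
    have hL : Tendsto (fun n => (t:ℂ) * ω (zseq E n) - zseq E n) atTop
        (𝓝 ((t:ℂ) * (W:ℂ) - (E:ℂ))) := (tendsto_const_nhds.mul hu).sub (zseq_tendsto E)
    have heq : ∀ n, ((t:ℂ) * ω (zseq E n) - zseq E n)/((t:ℂ)-1) = nrT μ (ω (zseq E n)) :=
      fun n => by
        rw [hω.eqn _ (zseq_mem E n), mul_div_cancel_left₀ _ (tcast_ne ht)]
    exact (hL.div_const _).congr heq
  have hbig : Tendsto (fun n => ‖nrT μ (ω (zseq E n))‖) atTop atTop := by
    refine hinv.congr fun n => ?_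
    rw [nrT, norm_neg, norm_inv]
  exact not_tendsto_atTop_of_tendsto_nhds hnr.norm hbig

lemma part_three [IsProbabilityMeasure μ] (ht : 1 < t)
    (hω : IsSubordT μ t ω) (E : ℝ) (g : ℂ → ℂ) (hg : AnalyticAt ℂ g (ω (E:ℂ)))
    (hgU : ∀ z ∈ UHP, g z = nrT μ z) :
    ((∀ zs : ℕ → ℂ, NonTangentialSeq zs E →
        Tendsto (fun n => ‖(ω (zs n) - ω (E:ℂ)) / (zs n - (E:ℂ))‖)
          atTop atTop)
      ↔ deriv g (ω (E:ℂ)) = ((t / (t - 1) : ℝ) : ℂ)) := by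
  have ht1 := tcast_ne ht
  have ht1' := tcast_norm ht
  have hcast : ((t / (t-1) : ℝ) : ℂ) = (t:ℂ)/((t:ℂ)-1) := by push_cast; ring
  set ω₀ := ω (E:ℂ) with hω₀
  set d := deriv g ω₀ with hd
  have hEq0 : (t:ℂ) * ω₀ - (E:ℂ) = ((t:ℂ) - 1) * g ω₀ :=
    subord_limit_eqn hω E hg.continuousAt hgU
  set c := (t:ℂ) - ((t:ℂ) - 1) * d with hc
  have hDer : HasDerivAt g d ω₀ := hg.differentiableAt.hasDerivAt
  have hLO := hasDerivAt_iff_isLittleO.mp hDer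
  have key : ∀ z ∈ UHP,
      z - (E:ℂ) = c * (ω z - ω₀) - ((t:ℂ) - 1) * (g (ω z) - g ω₀ - (ω z - ω₀) * d) := by
    intro z hz
    have e1 : (t:ℂ) * ω z - z = ((t:ℂ) - 1) * g (ω z) := by
      rw [hω.eqn z hz, hgU _ (hω.maps z hz)]
    rw [hc]
    linear_combination hEq0 - e1
  constructor
  · intro H
    by_contra hne
    have hcne : c ≠ 0 := by
      intro h0
      apply hne
      rw [hcast, eq_div_iff ht1] at hne ⊢
      rw [hc] at h0
      linear_combination -h0
    have hrat := H (zseq E) (zseq_nt E)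
    have hu : Tendsto (fun n => ω (zseq E n)) atTop (𝓝 ω₀) :=
      tendsto_omega_of_seq hω E (zseq_mem E) (zseq_tendsto E)
    have hnc : 0 < ‖c‖ := norm_pos_iff.mpr hcne
    have hεpos : 0 < ‖c‖ / (2 * (t-1)) := by
      apply div_pos hnc
      linarith
    have hev := hu.eventually (hLO.def hεpos)
    have hbound : ∀ᶠ n in atTop,
        ‖(ω (zseq E n) - ω₀)/(zseq E n - (E:ℂ))‖ ≤ 2/‖c‖ := by
      filter_upwards [hev] with n hn
      have hkey := key _ (zseq_mem E n)
      have hn' : ‖g (ω (zseq E n)) - g ω₀ - (ω (zseq E n) - ω₀) * d‖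
          ≤ ‖c‖ / (2 * (t-1)) * ‖ω (zseq E n) - ω₀‖ := by
        simpa [smul_eq_mul, mul_comm] using hn
      have h1 : ‖c * (ω (zseq E n) - ω₀)‖
          - ‖((t:ℂ)-1) * (g (ω (zseq E n)) - g ω₀ - (ω (zseq E n) - ω₀) * d)‖
          ≤ ‖zseq E n - (E:ℂ)‖ := by
        rw [hkey]
        exact norm_sub_norm_le _ _
      rw [norm_mul, norm_mul, ht1'] at h1
      have h2 : (t-1) * ‖g (ω (zseq E n)) - g ω₀ - (ω (zseq E n) - ω₀) * d‖
          ≤ ‖c‖/2 * ‖ω (zseq E n) - ω₀‖ := by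
        have h3 := mul_le_mul_of_nonneg_left hn' (by linarith : (0:ℝ) ≤ t - 1)
        have hε2 : (t-1) * (‖c‖ / (2 * (t-1))) = ‖c‖/2 := by
          rw [mul_comm, div_mul_eq_mul_div, mul_comm (2:ℝ) (t-1), ← div_div,
            mul_div_assoc, div_self (by linarith : t - 1 ≠ 0), mul_one]
        calc (t-1) * ‖g (ω (zseq E n)) - g ω₀ - (ω (zseq E n) - ω₀) * d‖
            ≤ (t-1) * (‖c‖ / (2 * (t-1)) * ‖ω (zseq E n) - ω₀‖) := h3
          _ = ‖c‖/2 * ‖ω (zseq E n) - ω₀‖ := by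
              rw [← mul_assoc, hε2]
      have h4 : ‖c‖/2 * ‖ω (zseq E n) - ω₀‖ ≤ ‖zseq E n - (E:ℂ)‖ := by linarith
      have hzpos := norm_sub_real_pos (zseq_mem E n) E
      rw [norm_div]
      rw [div_le_div_iff₀ hzpos hnc]
      nlinarith [h4, norm_nonneg (ω (zseq E n) - ω₀)]
    obtain ⟨n, hn1, hn2⟩ := ((hrat.eventually (eventually_gt_atTop (2/‖c‖))).and hbound).exists
    exact absurd hn1 (not_lt.mpr hn2)
  · intro hdeq zs hNT
    have hc0 : c = 0 := by
      rw [hc, hdeq, hcast]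
      field_simp
      ring
    obtain ⟨hmem, htend, _C, _hC⟩ := hNT
    have hu : Tendsto (fun n => ω (zs n)) atTop (𝓝 ω₀) := tendsto_omega_of_seq hω E hmem htend
    rw [tendsto_atTop]
    intro b
    have hbpos : (0:ℝ) < |b| + 1 := by positivity
    have hεpos : (0:ℝ) < ((t-1) * (|b|+1))⁻¹ := by
      apply inv_pos.mpr
      apply mul_pos (by linarith) hbpos
    have hev := hu.eventually (hLO.def hεpos)
    filter_upwards [hev] with n hn
    have hkey := key _ (hmem n)
    rw [hc0, zero_mul, zero_sub] at hkey
    have hn' : ‖g (ω (zs n)) - g ω₀ - (ω (zs n) - ω₀) * d‖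
        ≤ ((t-1) * (|b|+1))⁻¹ * ‖ω (zs n) - ω₀‖ := by
      simpa [smul_eq_mul, mul_comm] using hn
    have hzE : ‖zs n - (E:ℂ)‖ ≤ (t-1) * (((t-1) * (|b|+1))⁻¹ * ‖ω (zs n) - ω₀‖) := by
      rw [hkey, norm_neg, norm_mul, ht1']
      exact mul_le_mul_of_nonneg_left hn' (by linarith)
    have hzpos := norm_sub_real_pos (hmem n) E
    rw [norm_div]
    rw [le_div_iff₀ hzpos]
    have h8 : ((t-1) * (|b|+1)) * ((t-1) * (|b|+1))⁻¹ = 1 :=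
      mul_inv_cancel₀ (mul_pos (by linarith : (0:ℝ) < t-1) hbpos).ne'
    have h9 := mul_le_mul_of_nonneg_left hzE hbpos.le
    have h5 : (|b|+1) * ‖zs n - (E:ℂ)‖ ≤ ‖ω (zs n) - ω₀‖ := by
      nlinarith [h9, h8, norm_nonneg (ω (zs n) - ω₀)]
    nlinarith [le_abs_self b, abs_nonneg b, hzpos]

end AuxSubord


section AuxDiverge

variable {μ : Measure ℝ}

lemma rpow_min_le {a b y e : ℝ} (ha : 0 < a) (hay : a ≤ y) (hyb : y ≤ b) :
    min (a ^ e) (b ^ e) ≤ y ^ e := by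
  rcases le_or_gt 0 e with he | he
  · exact le_trans (min_le_left _ _) (Real.rpow_le_rpow ha.le hay he)
  · exact le_trans (min_le_right _ _) (Real.rpow_le_rpow_of_nonpos (ha.trans_le hay) hyb he.le)

lemma half_rpow {s e : ℝ} (hs : 0 < s) (hs1 : s ≤ 1) {y : ℝ} (hy1 : s/2 ≤ y) (hy2 : y ≤ s) :
    min ((2:ℝ)⁻¹ ^ e) 1 * s ^ |e| ≤ y ^ e := by
  have hs2 : (0:ℝ) < s/2 := by linarith
  have h1 : min ((s/2) ^ e) (s ^ e) ≤ y ^ e := rpow_min_le hs2 hy1 hy2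
  have h2 : (s/2:ℝ) ^ e = (2:ℝ)⁻¹ ^ e * s ^ e := by
    rw [div_eq_mul_inv, mul_comm s, Real.mul_rpow (by norm_num) hs.le]
  have h3 : s ^ |e| ≤ s ^ e := Real.rpow_le_rpow_of_exponent_ge hs hs1 (le_abs_self e)
  have hse : (0:ℝ) < s ^ e := Real.rpow_pos_of_pos hs e
  have hk : (0:ℝ) < min ((2:ℝ)⁻¹ ^ e) 1 := lt_min (Real.rpow_pos_of_pos (by norm_num) e) one_pos
  have h4 : min ((2:ℝ)⁻¹ ^ e) 1 * s ^ e ≤ min ((s/2)^e) (s^e) := by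
    rcases le_total ((2:ℝ)⁻¹ ^ e) 1 with hcase | hcase
    · rw [min_eq_left hcase]
      apply le_min
      · rw [h2]
      · nlinarith
    · rw [min_eq_right hcase, h2]
      apply le_min
      · nlinarith
      · nlinarith
  calc min ((2:ℝ)⁻¹ ^ e) 1 * s ^ |e| ≤ min ((2:ℝ)⁻¹ ^ e) 1 * s ^ e :=
        mul_le_mul_of_nonneg_left h3 hk.le
    _ ≤ min ((s/2)^e) (s^e) := h4
    _ ≤ y ^ e := h1

lemma lint_top_of_annuli [IsFiniteMeasure μ] {W c p δ : ℝ} (hc : 0 < c) (hp : p < 1) (hδ : 0 < δ)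
    (hmass : ∀ s : ℝ, 0 < s → s ≤ δ →
      ENNReal.ofReal (c * s ^ (1+p)) ≤ μ {x : ℝ | s/2 ≤ |x - W| ∧ |x - W| ≤ s}) :
    ∫⁻ x, ENNReal.ofReal ((Complex.normSq ((x:ℂ) - (W:ℂ)))⁻¹) ∂μ = ⊤ := by
  by_contra hfin
  set T := ∫⁻ x, ENNReal.ofReal ((Complex.normSq ((x:ℂ) - (W:ℂ)))⁻¹) ∂μ with hT
  have hTne : T ≠ ⊤ := hfin
  have hstep : ∀ s : ℝ, 0 < s → s ≤ δ → ENNReal.ofReal (c * s ^ (p-1)) ≤ T := by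
    intro s hs hsδ
    set A := {x : ℝ | s/2 ≤ |x - W| ∧ |x - W| ≤ s} with hA
    have hAm : MeasurableSet A := by
      have : A = (fun x : ℝ => |x - W|) ⁻¹' (Set.Icc (s/2) s) := by
        ext x; simp [hA, Set.mem_Icc]
      rw [this]
      exact (isClosed_Icc.preimage (by continuity)).measurableSet
    have hpt : ∀ᵐ x : ℝ ∂(μ.restrict A), ENNReal.ofReal ((s^2)⁻¹)
        ≤ ENNReal.ofReal ((Complex.normSq ((x:ℂ) - (W:ℂ)))⁻¹) := by
      rw [ae_restrict_iff' hAm]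
      refine ae_of_all _ fun x hx => ?_
      apply ENNReal.ofReal_le_ofReal
      have h1 : Complex.normSq ((x:ℂ) - (W:ℂ)) = (x - W)^2 := by
        rw [← Complex.ofReal_sub, Complex.normSq_ofReal]
        ring
      rw [h1]
      apply inv_anti₀ (by nlinarith [hx.1, sq_abs (x - W)] : (0:ℝ) < (x - W)^2)
      have h2 : |x - W| ≤ s := hx.2
      nlinarith [abs_nonneg (x - W), sq_abs (x - W)]
    have h5 : ENNReal.ofReal ((s^2)⁻¹) * μ A ≤ ∫⁻ x in A, ENNReal.ofReal ((Complex.normSq ((x:ℂ) - (W:ℂ)))⁻¹) ∂μ := by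
      rw [← setLIntegral_const A (ENNReal.ofReal ((s^2)⁻¹))]
      exact lintegral_mono_ae hpt
    have h6 : ∫⁻ x in A, ENNReal.ofReal ((Complex.normSq ((x:ℂ) - (W:ℂ)))⁻¹) ∂μ ≤ T := by
      rw [hT]
      exact lintegral_mono' Measure.restrict_le_self (le_refl _)
    have h7 : ENNReal.ofReal ((s^2)⁻¹) * ENNReal.ofReal (c * s ^ (1+p)) ≤ ENNReal.ofReal ((s^2)⁻¹) * μ A :=
      mul_le_mul_right (hmass s hs hsδ) _
    have h8 : ENNReal.ofReal ((s^2)⁻¹) * ENNReal.ofReal (c * s ^ (1+p))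
        = ENNReal.ofReal (c * s ^ (p-1)) := by
      rw [← ENNReal.ofReal_mul (by positivity)]
      congr 1
      have hexp : s ^ (1+p) = s ^ (p-1) * s^2 := by
        rw [← Real.rpow_natCast s 2, ← Real.rpow_add hs]
        norm_num
        ring_nf
      rw [hexp]
      field_simp
    calc ENNReal.ofReal (c * s ^ (p-1)) = ENNReal.ofReal ((s^2)⁻¹) * ENNReal.ofReal (c * s ^ (1+p)) := h8.symm
      _ ≤ ENNReal.ofReal ((s^2)⁻¹) * μ A := h7
      _ ≤ _ := h5.trans h6
  have hstep' : ∀ s : ℝ, 0 < s → s ≤ δ → c * s ^ (p-1) ≤ T.toReal := by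
    intro s hs hsδ
    calc c * s ^ (p-1) = (ENNReal.ofReal (c * s ^ (p-1))).toReal :=
          (ENNReal.toReal_ofReal (by positivity)).symm
      _ ≤ T.toReal := ENNReal.toReal_mono hTne (hstep s hs hsδ)
  have hdiv : Tendsto (fun s : ℝ => c * s ^ (p-1)) (𝓝[>] (0:ℝ)) atTop := by
    have h1 : Tendsto (fun s : ℝ => s⁻¹) (𝓝[>] (0:ℝ)) atTop := tendsto_inv_nhdsGT_zero
    have h2 : Tendsto (fun y : ℝ => y ^ (1-p)) atTop atTop := tendsto_rpow_atTop (by linarith)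
    have h3 : Tendsto (fun s : ℝ => (s⁻¹) ^ (1-p)) (𝓝[>] (0:ℝ)) atTop := h2.comp h1
    have h4 : Tendsto (fun s : ℝ => s ^ (p-1)) (𝓝[>] (0:ℝ)) atTop := by
      refine h3.congr' ?_
      filter_upwards [self_mem_nhdsWithin] with s hs
      have hs' : (0:ℝ) < s := hs
      rw [← Real.rpow_neg_one s, ← Real.rpow_mul hs'.le,
        show (-1:ℝ)*(1-p) = p-1 by ring]
    exact h4.const_mul_atTop hc
  have hev1 : ∀ᶠ s in 𝓝[>] (0:ℝ), s ≤ δ := by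
    have : Set.Ioc (0:ℝ) δ ∈ 𝓝[>] (0:ℝ) := Ioc_mem_nhdsGT_of_mem ⟨le_refl _, hδ⟩
    exact Filter.eventually_of_mem this fun s hs => hs.2
  have hev2 := hdiv.eventually (eventually_gt_atTop T.toReal)
  obtain ⟨s, ⟨hs1, hs2⟩, hs0⟩ := ((hev1.and hev2).and self_mem_nhdsWithin).exists
  exact absurd (hstep' s hs0 hs1) (not_le.mpr hs2)

end AuxDiverge

section AuxMass

variable {μ : Measure ℝ} {ρ : ℝ → ℝ}

lemma mass_lower [IsFiniteMeasure μ]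
    (hden : acPart μ = volume.withDensity fun x => ENNReal.ofReal (ρ x))
    {A : Set ℝ} (hA : MeasurableSet A) {c' v : ℝ} (hc' : 0 ≤ c')
    (hv : volume A = ENNReal.ofReal v)
    (hbd : ∀ᵐ x ∂volume, x ∈ A → c' ≤ ρ x) :
    ENNReal.ofReal (c' * v) ≤ μ A := by
  have h1 : μ A = μ.singularPart volume A + acPart μ A := by
    conv_lhs => rw [μ.haveLebesgueDecomposition_add volume]
    rw [Measure.add_apply]
    rfl
  have h2 : acPart μ A = ∫⁻ x in A, ENNReal.ofReal (ρ x) ∂volume := by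
    rw [hden, withDensity_apply _ hA]
  have h3 : ENNReal.ofReal c' * volume A ≤ ∫⁻ x in A, ENNReal.ofReal (ρ x) ∂volume := by
    rw [← setLIntegral_const A (ENNReal.ofReal c')]
    apply lintegral_mono_ae
    rw [ae_restrict_iff' hA]
    filter_upwards [hbd] with x hx hxA
    exact ENNReal.ofReal_le_ofReal (hx hxA)
  calc ENNReal.ofReal (c' * v) = ENNReal.ofReal c' * ENNReal.ofReal v := ENNReal.ofReal_mul hc'
    _ = ENNReal.ofReal c' * volume A := by rw [hv]
    _ ≤ acPart μ A := by rw [h2]; exact h3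
    _ ≤ μ A := by rw [h1]; exact le_add_self

lemma lint_top_of_density [IsFiniteMeasure μ]
    (hden : acPart μ = volume.withDensity fun x => ENNReal.ofReal (ρ x))
    {W cρ p δ : ℝ} (hc : 0 < cρ) (hp : p < 1) (hδ : 0 < δ)
    (hA : ∀ s : ℝ, 0 < s → s ≤ δ → ∃ A : Set ℝ, MeasurableSet A ∧
      volume A = ENNReal.ofReal (s/2) ∧ A ⊆ {x : ℝ | s/2 ≤ |x - W| ∧ |x - W| ≤ s} ∧
      (∀ᵐ x ∂volume, x ∈ A → cρ * s ^ p ≤ ρ x)) :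
    ∫⁻ x, ENNReal.ofReal ((Complex.normSq ((x:ℂ) - (W:ℂ)))⁻¹) ∂μ = ⊤ := by
  apply lint_top_of_annuli (c := cρ/2) (by linarith) hp hδ
  intro s hs hsδ
  obtain ⟨A, hAm, hAvol, hAsub, hAbd⟩ := hA s hs hsδ
  have h1 : ENNReal.ofReal ((cρ * s ^ p) * (s/2)) ≤ μ A :=
    mass_lower hden hAm (by positivity) hAvol hAbd
  have h2 : cρ/2 * s ^ (1+p) = (cρ * s ^ p) * (s/2) := by
    rw [Real.rpow_add hs, Real.rpow_one]
    ring
  rw [h2]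
  exact h1.trans (measure_mono hAsub)

lemma lint_top_of_suppac {nac npp nppout : ℕ} {Em Ep : Fin nac → ℝ} {atom : Fin npp → ℝ}
    (hμ : Assumption1 μ nac npp nppout Em Ep atom ρ) {W : ℝ}
    (hW : W ∈ msupp (acPart μ)) :
    ∫⁻ x, ENNReal.ofReal ((Complex.normSq ((x:ℂ) - (W:ℂ)))⁻¹) ∂μ = ⊤ := by
  haveI := hμ.prob
  have hWj : ∃ j, W ∈ Set.Icc (Em j) (Ep j) := by
    rw [hμ.supp_ac] at hW
    exact Set.mem_iUnion.mp hW
  obtain ⟨j, hj⟩ := hWj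
  obtain ⟨tm, tp, C, htm1, htm2, htp1, htp2, hC, hae⟩ := hμ.power_law j
  set a := Em j with ha
  set b := Ep j with hb
  have hab : a < b := hμ.lt j
  have hCpos : (0:ℝ) < C⁻¹ := inv_pos.mpr (by linarith)
  rcases lt_or_eq_of_le hj.2 with hWb | hWb
  · -- W < b : use right annuli
    set d2 : ℝ := (b - W)/2 with hd2
    have hd2pos : 0 < d2 := by rw [hd2]; linarith
    set m2 : ℝ := min (d2 ^ tp) ((b - a) ^ tp) with hm2
    have hm2pos : 0 < m2 :=
      lt_min (Real.rpow_pos_of_pos hd2pos _) (Real.rpow_pos_of_pos (by linarith) _)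
    have hsub : ∀ s : ℝ, 0 < s → s ≤ min d2 1 →
        Set.Ioo (W + s/2) (W + s) ⊆ Set.Ioo a b ∩ {x : ℝ | s/2 ≤ |x - W| ∧ |x - W| ≤ s} := by
      intro s hs hsδ x hx
      have hsd : s ≤ d2 := le_trans hsδ (min_le_left _ _)
      have hx1 := hx.1
      have hx2 := hx.2
      have hxW : 0 < x - W := by linarith
      constructor
      · constructor
        · linarith [hj.1]
        · rw [hd2] at hsd
          linarith
      · constructor
        · rw [abs_of_pos hxW]; linarith
        · rw [abs_of_pos hxW]; linarith
    have hbx : ∀ s : ℝ, 0 < s → s ≤ min d2 1 → ∀ x ∈ Set.Ioo (W + s/2) (W + s),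
        d2 ≤ b - x ∧ b - x ≤ b - a := by
      intro s hs hsδ x hx
      have hsd : s ≤ d2 := le_trans hsδ (min_le_left _ _)
      constructor
      · rw [hd2] at hsd ⊢; linarith [hx.2]
      · have h3 := (hsub s hs hsδ hx).1.1
        linarith
    rcases lt_or_eq_of_le hj.1 with hWa | hWa
    · -- a < W < b : interior, p = 0
      set d1 : ℝ := W - a with hd1
      have hd1pos : 0 < d1 := by rw [hd1]; linarith
      set m1 : ℝ := min (d1 ^ tm) ((b - a) ^ tm) with hm1
      have hm1pos : 0 < m1 :=
        lt_min (Real.rpow_pos_of_pos hd1pos _) (Real.rpow_pos_of_pos (by linarith) _)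
      apply lint_top_of_density hμ.ac_density
        (cρ := C⁻¹ * (m1 * m2)) (p := 0) (δ := min d2 1)
        (by positivity) (by norm_num) (lt_min hd2pos one_pos)
      intro s hs hsδ
      refine ⟨Set.Ioo (W + s/2) (W + s), measurableSet_Ioo, ?_, ?_, ?_⟩
      · rw [Real.volume_Ioo]; congr 1; ring
      · exact fun x hx => (hsub s hs hsδ hx).2
      · filter_upwards [hae] with x hpw hxA
        have hxIoo : x ∈ Set.Ioo a b := (hsub s hs hsδ hxA).1
        have hxa : 0 < x - a := by linarith [hxIoo.1]
        have hbxpos : 0 < b - x := by linarith [hxIoo.2]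
        have hpw' := (hpw ⟨hxIoo.1.le, hxIoo.2.le⟩).1
        have hpwpos : 0 < (x - a) ^ tm * (b - x) ^ tp :=
          mul_pos (Real.rpow_pos_of_pos hxa _) (Real.rpow_pos_of_pos hbxpos _)
        have hρ : C⁻¹ * ((x - a) ^ tm * (b - x) ^ tp) < ρ x :=
          (lt_div_iff₀ hpwpos).mp hpw'
        have h1 : m1 ≤ (x - a) ^ tm := by
          apply le_trans _ (rpow_min_le hd1pos (by linarith [hxA.1, hd1] : d1 ≤ x - a)
            (by linarith [hxIoo.2] : x - a ≤ b - a))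
          rw [hm1]
        have h2 : m2 ≤ (b - x) ^ tp := by
          obtain ⟨hb1, hb2⟩ := hbx s hs hsδ x hxA
          apply le_trans _ (rpow_min_le hd2pos hb1 hb2)
          rw [hm2]
        rw [Real.rpow_zero, mul_one]
        nlinarith [mul_le_mul h1 h2 hm2pos.le (Real.rpow_pos_of_pos hxa tm).le]
    · -- W = a : left endpoint, p = |tm|
      set κ : ℝ := min ((2:ℝ)⁻¹ ^ tm) 1 with hκ
      have hκpos : 0 < κ := lt_min (Real.rpow_pos_of_pos (by norm_num) _) one_pos
      apply lint_top_of_density hμ.ac_density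
        (cρ := C⁻¹ * (κ * m2)) (p := |tm|) (δ := min d2 1)
        (by positivity) (abs_lt.mpr ⟨htm1, htm2⟩) (lt_min hd2pos one_pos)
      intro s hs hsδ
      have hs1 : s ≤ 1 := le_trans hsδ (min_le_right _ _)
      refine ⟨Set.Ioo (W + s/2) (W + s), measurableSet_Ioo, ?_, ?_, ?_⟩
      · rw [Real.volume_Ioo]; congr 1; ring
      · exact fun x hx => (hsub s hs hsδ hx).2
      · filter_upwards [hae] with x hpw hxA
        have hxIoo : x ∈ Set.Ioo a b := (hsub s hs hsδ hxA).1
        have hxa : 0 < x - a := by linarith [hxIoo.1]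
        have hbxpos : 0 < b - x := by linarith [hxIoo.2]
        have hpw' := (hpw ⟨hxIoo.1.le, hxIoo.2.le⟩).1
        have hpwpos : 0 < (x - a) ^ tm * (b - x) ^ tp :=
          mul_pos (Real.rpow_pos_of_pos hxa _) (Real.rpow_pos_of_pos hbxpos _)
        have hρ : C⁻¹ * ((x - a) ^ tm * (b - x) ^ tp) < ρ x :=
          (lt_div_iff₀ hpwpos).mp hpw'
        have h1 : κ * s ^ |tm| ≤ (x - a) ^ tm := by
          have hy1 : s/2 ≤ x - a := by
            rw [hWa]
            linarith [hxA.1]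
          have hy2 : x - a ≤ s := by
            rw [hWa]
            linarith [hxA.2]
          rw [hκ]
          exact half_rpow hs hs1 hy1 hy2
        have h2 : m2 ≤ (b - x) ^ tp := by
          obtain ⟨hb1, hb2⟩ := hbx s hs hsδ x hxA
          apply le_trans _ (rpow_min_le hd2pos hb1 hb2)
          rw [hm2]
        have hspow : (0:ℝ) < s ^ |tm| := Real.rpow_pos_of_pos hs _
        nlinarith [mul_le_mul h1 h2 hm2pos.le (Real.rpow_pos_of_pos hxa tm).le,
          mul_pos hκpos hspow]
  · -- W = b : right endpoint, use left annuli, p = |tp|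
    have hWa : a < W := by rw [hWb]; exact hab
    set d1 : ℝ := (W - a)/2 with hd1
    have hd1pos : 0 < d1 := by rw [hd1]; linarith
    set m1 : ℝ := min (d1 ^ tm) ((b - a) ^ tm) with hm1
    have hm1pos : 0 < m1 :=
      lt_min (Real.rpow_pos_of_pos hd1pos _) (Real.rpow_pos_of_pos (by linarith) _)
    set κ : ℝ := min ((2:ℝ)⁻¹ ^ tp) 1 with hκ
    have hκpos : 0 < κ := lt_min (Real.rpow_pos_of_pos (by norm_num) _) one_pos
    have hsub : ∀ s : ℝ, 0 < s → s ≤ min d1 1 →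
        Set.Ioo (W - s) (W - s/2) ⊆ Set.Ioo a b ∩ {x : ℝ | s/2 ≤ |x - W| ∧ |x - W| ≤ s} := by
      intro s hs hsδ x hx
      have hsd : s ≤ d1 := le_trans hsδ (min_le_left _ _)
      have hx1 := hx.1
      have hx2 := hx.2
      have hxW : x - W < 0 := by linarith
      constructor
      · constructor
        · rw [hd1] at hsd
          linarith
        · rw [← hWb]
          linarith
      · constructor
        · rw [abs_of_neg hxW]; linarith
        · rw [abs_of_neg hxW]; linarith
    apply lint_top_of_density hμ.ac_density
      (cρ := C⁻¹ * (m1 * κ)) (p := |tp|) (δ := min d1 1)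
      (by positivity) (abs_lt.mpr ⟨htp1, htp2⟩) (lt_min hd1pos one_pos)
    intro s hs hsδ
    have hs1 : s ≤ 1 := le_trans hsδ (min_le_right _ _)
    refine ⟨Set.Ioo (W - s) (W - s/2), measurableSet_Ioo, ?_, ?_, ?_⟩
    · rw [Real.volume_Ioo]; congr 1; ring
    · exact fun x hx => (hsub s hs hsδ hx).2
    · filter_upwards [hae] with x hpw hxA
      have hxIoo : x ∈ Set.Ioo a b := (hsub s hs hsδ hxA).1
      have hxa : 0 < x - a := by linarith [hxIoo.1]
      have hbxpos : 0 < b - x := by linarith [hxIoo.2]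
      have hpw' := (hpw ⟨hxIoo.1.le, hxIoo.2.le⟩).1
      have hpwpos : 0 < (x - a) ^ tm * (b - x) ^ tp :=
        mul_pos (Real.rpow_pos_of_pos hxa _) (Real.rpow_pos_of_pos hbxpos _)
      have hρ : C⁻¹ * ((x - a) ^ tm * (b - x) ^ tp) < ρ x :=
        (lt_div_iff₀ hpwpos).mp hpw'
      have h1 : m1 ≤ (x - a) ^ tm := by
        have hsd : s ≤ d1 := le_trans hsδ (min_le_left _ _)
        have hy1 : d1 ≤ x - a := by
          rw [hd1] at hsd ⊢
          linarith [hxA.1]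
        have hy2 : x - a ≤ b - a := by linarith [hxIoo.2]
        apply le_trans _ (rpow_min_le hd1pos hy1 hy2)
        rw [hm1]
      have h2 : κ * s ^ |tp| ≤ (b - x) ^ tp := by
        have hy1 : s/2 ≤ b - x := by
          rw [← hWb]
          linarith [hxA.2]
        have hy2 : b - x ≤ s := by
          rw [← hWb]
          linarith [hxA.1]
        rw [hκ]
        exact half_rpow hs hs1 hy1 hy2
      have hspow : (0:ℝ) < s ^ |tp| := Real.rpow_pos_of_pos hs _
      nlinarith [mul_le_mul h1 h2 (by positivity : (0:ℝ) ≤ κ * s ^ |tp|)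
          (Real.rpow_pos_of_pos hxa tm).le,
        mul_pos hκpos hspow]

end AuxMass

section AuxHeavy

variable {μ : Measure ℝ} {t : ℝ} {ω : ℂ → ℂ}

lemma no_real_in_suppac {nac npp nppout : ℕ} {Em Ep : Fin nac → ℝ} {atom : Fin npp → ℝ}
    {ρ : ℝ → ℝ} (hμ : Assumption1 μ nac npp nppout Em Ep atom ρ)
    (ht : 1 < t) (hω : IsSubordT μ t ω) {E W : ℝ}
    (hωE : ω (E:ℂ) = ((W:ℝ):ℂ)) (hW0 : μ {W} = 0)
    (hWs : W ∈ msupp (acPart μ)) : False := by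
  haveI := hμ.prob
  set u : ℕ → ℂ := fun n => ω (zseq E n) with hudef
  have humem : ∀ n, u n ∈ UHP := fun n => hω.maps _ (zseq_mem E n)
  have him : ∀ n, 0 < (u n).im := fun n => humem n
  have hu : Tendsto u atTop (𝓝 ((W:ℝ):ℂ)) := by
    have := tendsto_omega_of_seq hω E (zseq_mem E) (zseq_tendsto E)
    rwa [hωE] at this
  -- lintegrals
  set G : ℕ → ENNReal := fun n => ∫⁻ x, ENNReal.ofReal ((Complex.normSq ((x:ℂ) - u n))⁻¹) ∂μ
    with hGdef
  have hmeas : ∀ n, Measurable fun x : ℝ =>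
      ENNReal.ofReal ((Complex.normSq ((x:ℂ) - u n))⁻¹) := fun n =>
    ENNReal.measurable_ofReal.comp
      ((Complex.continuous_normSq.measurable.comp
        (Complex.measurable_ofReal.sub_const (u n))).inv)
  have hGfin : ∀ n, G n ≠ ⊤ := by
    intro n
    have hb : ∀ x : ℝ, ENNReal.ofReal ((Complex.normSq ((x:ℂ) - u n))⁻¹)
        ≤ ENNReal.ofReal ((((u n).im)^2)⁻¹) := by
      intro x
      apply ENNReal.ofReal_le_ofReal
      exact nsq_inv_le (him n) (by simpa [abs_of_pos (him n)] using im_le_dist (u n) x)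
    have h1 : G n ≤ ENNReal.ofReal ((((u n).im)^2)⁻¹) * μ Set.univ := by
      rw [hGdef, ← lintegral_const]
      exact lintegral_mono hb
    have h2 : ENNReal.ofReal ((((u n).im)^2)⁻¹) * μ Set.univ < ⊤ :=
      ENNReal.mul_lt_top ENNReal.ofReal_lt_top (measure_lt_top μ _)
    exact (h1.trans_lt h2).ne
  have hIeq : ∀ n, Ifun μ (u n) = (G n).toReal := by
    intro n
    rw [Ifun, hGdef]
    rw [integral_eq_lintegral_of_nonneg_ae
      (ae_of_all _ fun x => inv_nonneg.mpr (Complex.normSq_nonneg _)) (aesm_nsq (u n))]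
  -- Fatou
  have hliminf : Filter.liminf G atTop = ⊤ := by
    apply top_unique
    have hTop := lint_top_of_suppac hμ hWs
    have hpt : ∀ᵐ x : ℝ ∂μ, ENNReal.ofReal ((Complex.normSq ((x:ℂ) - ((W:ℝ):ℂ)))⁻¹)
        ≤ Filter.liminf (fun n => ENNReal.ofReal ((Complex.normSq ((x:ℂ) - u n))⁻¹)) atTop := by
      filter_upwards [measure_eq_zero_iff_ae_notMem.mp hW0] with x hx
      have hx0 : (x:ℂ) - ((W:ℝ):ℂ) ≠ 0 := by
        rw [sub_ne_zero]
        exact_mod_cast hx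
      have hc : Tendsto (fun n => ENNReal.ofReal ((Complex.normSq ((x:ℂ) - u n))⁻¹)) atTop
          (𝓝 (ENNReal.ofReal ((Complex.normSq ((x:ℂ) - ((W:ℝ):ℂ)))⁻¹))) := by
        apply ENNReal.continuous_ofReal.continuousAt.tendsto.comp
        apply Tendsto.inv₀
        · exact (Complex.continuous_normSq.continuousAt.tendsto).comp
            (tendsto_const_nhds.sub hu)
        · exact (Complex.normSq_pos.mpr hx0).ne'
      rw [hc.liminf_eq]
    calc (⊤:ENNReal) = ∫⁻ x, ENNReal.ofReal ((Complex.normSq ((x:ℂ) - ((W:ℝ):ℂ)))⁻¹) ∂μ := hTop.symm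
      _ ≤ ∫⁻ x, Filter.liminf (fun n => ENNReal.ofReal ((Complex.normSq ((x:ℂ) - u n))⁻¹)) atTop ∂μ :=
          lintegral_mono_ae hpt
      _ ≤ Filter.liminf G atTop := lintegral_liminf_le hmeas
  have hItend : Tendsto (fun n => Ifun μ (u n)) atTop atTop := by
    rw [tendsto_atTop]
    intro M
    have h1 : ENNReal.ofReal (max M 0) < Filter.liminf G atTop := by
      rw [hliminf]
      exact ENNReal.ofReal_lt_top
    filter_upwards [eventually_lt_of_lt_liminf h1] with n hn
    have h2 := ENNReal.toReal_mono (hGfin n) hn.le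
    rw [ENNReal.toReal_ofReal (le_max_right M 0)] at h2
    rw [hIeq n]
    exact le_trans (le_max_left M 0) h2
  -- key inequality
  have hkey : ∀ n, Ifun μ (u n) * (t - 1) ≤ t * Complex.normSq (stT μ (u n)) := fun n =>
    key_ineq ht (zseq_mem E n) (him n) (hω.eqn _ (zseq_mem E n))
  -- choose R
  have hball : Tendsto (fun k : ℕ => μ (Metric.closedBall W (1/((k:ℝ)+1)))) atTop (𝓝 0) := by
    have hiInter : ⋂ k : ℕ, Metric.closedBall W (1/((k:ℝ)+1)) = {W} := by
      ext x
      simp only [Set.mem_iInter, Metric.mem_closedBall, Set.mem_singleton_iff]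
      constructor
      · intro h
        have h2 : dist x W ≤ 0 :=
          ge_of_tendsto' tendsto_one_div_add_atTop_nhds_zero_nat fun n => h n
        exact dist_le_zero.mp h2
      · intro h n
        rw [h, dist_self]
        positivity
    have := tendsto_measure_iInter_atTop (μ := μ)
      (s := fun k : ℕ => Metric.closedBall W (1/((k:ℝ)+1)))
      (fun k => measurableSet_closedBall.nullMeasurableSet)
      (fun i j hij => Metric.closedBall_subset_closedBall (by
        apply one_div_le_one_div_of_le (by positivity)
        linarith [(Nat.cast_le (α := ℝ)).mpr hij]))
      ⟨0, measure_ne_top μ _⟩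
    rw [hiInter, hW0] at this
    exact this
  have htoReal : Tendsto (fun k : ℕ => (μ (Metric.closedBall W (1/((k:ℝ)+1)))).toReal)
      atTop (𝓝 0) := by
    have h0 : ((0:ENNReal)).toReal = 0 := by simp
    have := (ENNReal.tendsto_toReal (by simp : (0:ENNReal) ≠ ⊤)).comp hball
    rwa [h0] at this
  have hthr : (0:ℝ) < (t-1)/(4*t) := by
    apply div_pos (by linarith) (by linarith)
  obtain ⟨k, hk⟩ := (htoReal.eventually (gt_mem_nhds hthr)).exists
  set R : ℝ := 1/((k:ℝ)+1) with hRdef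
  have hR : 0 < R := by positivity
  set mB : ℝ := (μ (Metric.ball W R)).toReal with hmB
  have hmB0 : 0 ≤ mB := ENNReal.toReal_nonneg
  have hmBlt : mB < (t-1)/(4*t) := by
    apply lt_of_le_of_lt _ hk
    exact ENNReal.toReal_mono (measure_ne_top μ _) (measure_mono Metric.ball_subset_closedBall)
  set y : ℝ := 2/R with hy
  have hy0 : 0 < y := by positivity
  have hev1 : ∀ᶠ n in atTop, dist (u n) ((W:ℝ):ℂ) < R/2 :=
    Metric.tendsto_nhds.mp hu (R/2) (by positivity)
  have hev2 : ∀ᶠ n in atTop, (4*t*y^2)/(t-1) + 1 ≤ Ifun μ (u n) :=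
    hItend.eventually (eventually_ge_atTop _)
  obtain ⟨n, hn1, hn2⟩ := (hev1.and hev2).exists
  -- final contradiction
  set In : ℝ := Ifun μ (u n) with hIn
  set Sn : ℝ := ‖stT μ (u n)‖ with hSn
  have hIn0 : 0 ≤ In := Ifun_nonneg _
  have hcs : Sn ≤ Real.sqrt (mB * In) + y := cs_bound (him n) hR hn1.le
  have hnsq : Complex.normSq (stT μ (u n)) = Sn^2 := by
    rw [hSn, Complex.normSq_eq_norm_sq]
  have hsq : Sn^2 ≤ 2*(mB*In) + 2*y^2 := by
    have h1 : 0 ≤ mB * In := mul_nonneg hmB0 hIn0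
    have h2 := Real.sq_sqrt h1
    have h3 := Real.sqrt_nonneg (mB * In)
    nlinarith [sq_nonneg (Real.sqrt (mB*In) - y), norm_nonneg (stT μ (u n))]
  have hf1 : In * (t-1) ≤ 2*t*(mB*In) + 2*t*y^2 := by
    have := hkey n
    rw [hnsq] at this
    nlinarith [this]
  have hf2 : 4*t*mB ≤ t-1 := by
    have := (lt_div_iff₀ (by linarith : (0:ℝ) < 4*t)).mp hmBlt
    nlinarith [this]
  have hf3 : 4*t*y^2 + (t-1) ≤ In * (t-1) := by
    have hid : ((4*t*y^2)/(t-1) + 1) * (t-1) = 4*t*y^2 + (t-1) := by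
      have hne : t - 1 ≠ 0 := by linarith
      field_simp
    have := mul_le_mul_of_nonneg_right hn2 (by linarith : (0:ℝ) ≤ t-1)
    rw [hid] at this
    linarith
  have hprod : 4*t*mB*In ≤ (t-1)*In := mul_le_mul_of_nonneg_right hf2 hIn0
  nlinarith [hf1, hf3, hprod, sq_nonneg y, hIn0]

end AuxHeavy

section AuxGlue

variable {μ : Measure ℝ}

lemma dist_coe (x y : ℝ) : dist ((x:ℝ):ℂ) ((y:ℝ):ℂ) = |x - y| := by
  rw [Complex.dist_eq, ← Complex.ofReal_sub, Complex.norm_real, Real.norm_eq_abs]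

lemma stT_analyticAt_near [IsFiniteMeasure μ] {W ε : ℝ} (hε : 0 < ε)
    (hnull : μ (Set.Ioo (W-ε) (W+ε)) = 0) {v : ℂ} (hv : dist v ((W:ℝ):ℂ) < ε/2) :
    AnalyticAt ℂ (stT μ) v := by
  have hδ : 0 < ε - dist v ((W:ℝ):ℂ) := by
    have := hv.trans_le (by linarith : ε/2 ≤ ε)
    linarith
  apply stT_analyticAt hδ
  filter_upwards [measure_eq_zero_iff_ae_notMem.mp hnull] with x hx
  have h1 : ε ≤ |x - W| := by
    simp only [Set.mem_Ioo, not_and_or, not_lt] at hx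
    rcases hx with h | h
    · rw [abs_sub_comm, abs_of_nonneg (by linarith)]; linarith
    · rw [abs_of_nonneg (by linarith)]; linarith
  have h2 : ε ≤ dist ((x:ℝ):ℂ) ((W:ℝ):ℂ) := by rwa [dist_coe]
  have h3 := dist_triangle ((x:ℝ):ℂ) v ((W:ℝ):ℂ)
  have h4 := dist_comm v ((W:ℝ):ℂ)
  linarith [dist_triangle ((x:ℝ):ℂ) v ((W:ℝ):ℂ)]

lemma offsupp_result [IsProbabilityMeasure μ] {W ε : ℝ} (hε : 0 < ε)
    (hnull : μ (Set.Ioo (W-ε) (W+ε)) = 0) (hne : stT μ ((W:ℝ):ℂ) ≠ 0) :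
    ∃ r : ℝ, 0 < r ∧ ∃ g : ℂ → ℂ,
      (∀ u ∈ Metric.ball ((W:ℝ):ℂ) r, AnalyticAt ℂ g u) ∧
      Set.EqOn g (nrT μ) (Metric.ball ((W:ℝ):ℂ) r ∩ UHP) := by
  have hcont : ContinuousAt (stT μ) ((W:ℝ):ℂ) :=
    (stT_analyticAt_near hε hnull (by rw [dist_self]; linarith)).continuousAt
  obtain ⟨r₀, hr₀, hr₀'⟩ := Metric.eventually_nhds_iff.mp (hcont.eventually_ne hne)
  refine ⟨min r₀ (ε/2), lt_min hr₀ (by linarith), nrT μ, fun u hu => ?_, fun u _ => rfl⟩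
  rw [Metric.mem_ball] at hu
  have h1 : AnalyticAt ℂ (stT μ) u :=
    stT_analyticAt_near hε hnull (lt_of_lt_of_le hu (min_le_right _ _))
  have h2 : stT μ u ≠ 0 := hr₀' (lt_of_lt_of_le hu (min_le_left _ _))
  have := (h1.inv h2).neg
  exact this

lemma atom_result [IsProbabilityMeasure μ] {W ε : ℝ} (hε : 0 < ε) (hatom : μ {W} ≠ 0)
    (hnull : μ (Set.Ioo (W-ε) (W+ε) \ {W}) = 0) :
    ∃ r : ℝ, 0 < r ∧ ∃ g : ℂ → ℂ,
      (∀ u ∈ Metric.ball ((W:ℝ):ℂ) r, AnalyticAt ℂ g u) ∧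
      Set.EqOn g (nrT μ) (Metric.ball ((W:ℝ):ℂ) r ∩ UHP) := by
  set ν : Measure ℝ := μ.restrict {W}ᶜ with hν
  have hνnull : ν (Set.Ioo (W-ε) (W+ε)) = 0 := by
    rw [hν, Measure.restrict_apply measurableSet_Ioo, ← Set.diff_eq]
    exact hnull
  set c : ℝ := (μ {W}).toReal with hcdef
  have hc : 0 < c := ENNReal.toReal_pos hatom (measure_ne_top μ _)
  have hdec : ∀ u : ℂ, 0 < u.im → stT μ u = (c:ℂ) * (((W:ℝ):ℂ) - u)⁻¹ + stT ν u := by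
    intro u hu
    have hsplit : μ = μ.restrict {W} + ν :=
      (Measure.restrict_add_restrict_compl (measurableSet_singleton W)).symm
    rw [stT]
    conv_lhs => rw [hsplit]
    rw [integral_add_measure ((integrable_inv_uhp hu).restrict) ((integrable_inv_uhp hu).restrict)]
    congr 1
    rw [Measure.restrict_singleton, integral_smul_measure, integral_dirac]
    simp [hcdef, smul_eq_mul]
  set D : ℂ → ℂ := fun u => (c:ℂ) + (((W:ℝ):ℂ) - u) * stT ν u with hD
  have hDanal : ∀ u, dist u ((W:ℝ):ℂ) < ε/2 → AnalyticAt ℂ D u := by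
    intro u hu
    have h1 : AnalyticAt ℂ (stT ν) u := stT_analyticAt_near hε hνnull hu
    exact analyticAt_const.add ((analyticAt_const.sub analyticAt_id).mul h1)
  have hD0 : D ((W:ℝ):ℂ) = (c:ℂ) := by simp [hD]
  have hDne : D ((W:ℝ):ℂ) ≠ 0 := by
    rw [hD0]
    exact Complex.ofReal_ne_zero.mpr hc.ne'
  have hDcont : ContinuousAt D ((W:ℝ):ℂ) :=
    (hDanal _ (by rw [dist_self]; linarith)).continuousAt
  obtain ⟨r₀, hr₀, hr₀'⟩ := Metric.eventually_nhds_iff.mp (hDcont.eventually_ne hDne)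
  refine ⟨min r₀ (ε/2), lt_min hr₀ (by linarith),
    fun u => -((((W:ℝ):ℂ) - u) * (D u)⁻¹), fun u hu => ?_, fun u hu => ?_⟩
  · rw [Metric.mem_ball] at hu
    have h1 := hDanal u (lt_of_lt_of_le hu (min_le_right _ _))
    have h2 : D u ≠ 0 := hr₀' (lt_of_lt_of_le hu (min_le_left _ _))
    exact ((analyticAt_const.sub analyticAt_id).mul (h1.inv h2)).neg
  · obtain ⟨hub, huU⟩ := hu
    rw [Metric.mem_ball] at hub
    have huim : 0 < u.im := huU
    have hWu : ((W:ℝ):ℂ) - u ≠ 0 := by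
      intro h
      have h2 := congrArg Complex.im h
      simp only [Complex.sub_im, Complex.ofReal_im, Complex.zero_im, zero_sub,
        neg_eq_zero] at h2
      exact huim.ne' h2
    have hst := hdec u huim
    have hDu : D u = (((W:ℝ):ℂ) - u) * stT μ u := by
      rw [hD]
      simp only
      rw [hst]
      field_simp
    have hDune : D u ≠ 0 := hr₀' (lt_of_lt_of_le hub (min_le_left _ _))
    show -((((W:ℝ):ℂ) - u) * (D u)⁻¹) = nrT μ u
    rw [nrT, hDu, mul_inv, ← mul_assoc, mul_inv_cancel₀ hWu, one_mul]

lemma not_msupp_iff {ν : Measure ℝ} {W : ℝ} :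
    W ∉ msupp ν ↔ ∃ ε > 0, ν (Set.Ioo (W-ε) (W+ε)) = 0 := by
  simp only [msupp, Set.mem_setOf_eq, not_forall]
  constructor
  · rintro ⟨ε, hε, h⟩
    exact ⟨ε, hε, by simpa using le_zero_iff.mp (not_lt.mp h)⟩
  · rintro ⟨ε, hε, h⟩
    exact ⟨ε, hε, by rw [h]; exact lt_irrefl 0⟩

lemma mu_apply_decomp [IsFiniteMeasure μ] (S : Set ℝ) :
    μ S = μ.singularPart volume S + acPart μ S := by
  conv_lhs => rw [μ.haveLebesgueDecomposition_add volume]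
  rw [Measure.add_apply]
  rfl

lemma acPart_ac : acPart μ ≪ volume := withDensity_absolutelyContinuous _ _

end AuxGlue

section AuxFinal

variable {μ : Measure ℝ}

lemma atoms_away {npp : ℕ} (atom : Fin npp → ℝ) (hnpp : 1 ≤ npp) (W : ℝ) :
    ∃ ε > 0, ∀ j, atom j = W ∨ atom j ∉ Set.Ioo (W-ε) (W+ε) := by
  classical
  set f : Fin npp → ℝ := fun j => if atom j = W then 1 else |atom j - W| with hf
  have hne : (Finset.univ : Finset (Fin npp)).Nonempty := ⟨⟨0, hnpp⟩, Finset.mem_univ _⟩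
  refine ⟨Finset.univ.inf' hne f, ?_, fun j => ?_⟩
  · rw [gt_iff_lt, Finset.lt_inf'_iff]
    intro j _
    by_cases h : atom j = W
    · simp [hf, h]
    · simp only [hf, h, if_false]
      exact abs_pos.mpr (sub_ne_zero.mpr h)
  · by_cases h : atom j = W
    · exact Or.inl h
    · right
      intro hmem
      have h1 : Finset.univ.inf' hne f ≤ |atom j - W| := by
        have h2 := Finset.inf'_le f (Finset.mem_univ j)
        simpa only [hf, h, if_false] using h2
      have h3 : |atom j - W| < Finset.univ.inf' hne f :=
        abs_lt.mpr ⟨by linarith [hmem.1], by linarith [hmem.2]⟩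
      linarith

lemma sing_null {nac npp nppout : ℕ} {Em Ep : Fin nac → ℝ} {atom : Fin npp → ℝ} {ρ : ℝ → ℝ}
    (hμ : Assumption1 μ nac npp nppout Em Ep atom ρ) {S : Set ℝ}
    (hS : MeasurableSet S) (h : ∀ j, atom j ∉ S) : μ.singularPart volume S = 0 := by
  rw [hμ.sing_atomic, Measure.finset_sum_apply]
  apply Finset.sum_eq_zero
  intro j _
  rw [Measure.smul_apply, Measure.dirac_apply' _ hS]
  simp [Set.indicator_of_notMem (h j)]


/-- Analytic extension of `F_μ`, Julia–Carathéodory derivative at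
atoms, and characterization of divergence of the derivative of `ω_t`. -/
theorem julia_caratheodory_properties
    (μ : Measure ℝ) (nac npp nppout : ℕ)
    (Em Ep : Fin nac → ℝ) (atom : Fin npp → ℝ) (ρ : ℝ → ℝ)
    (hμ : Assumption1 μ nac npp nppout Em Ep atom ρ)
    (t : ℝ) (ht : 1 < t) (ω : ℂ → ℂ) (hω : IsSubordT μ t ω) :
    -- (i) F_μ extends analytically to a neighborhood of every point of ω_t(ℂ⁺ ∪ ℝ)
    -- which is not an atom of μ lying in supp(μ_ac)
    (∀ w ∈ ω '' CUHP, ¬(w.im = 0 ∧ μ {w.re} ≠ 0 ∧ w.re ∈ msupp (acPart μ)) →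
      ∃ r : ℝ, 0 < r ∧ ∃ g : ℂ → ℂ,
        (∀ u ∈ Metric.ball w r, AnalyticAt ℂ g u) ∧
        Set.EqOn g (nrT μ) (Metric.ball w r ∩ UHP)) ∧
    -- (ii) the Julia–Carathéodory derivative of F_μ at an atom E equals 1/μ({E})
    (∀ E : ℝ, μ {E} ≠ 0 → ∀ zs : ℕ → ℂ, NonTangentialSeq zs E →
      Tendsto (fun n => nrT μ (zs n) / (zs n - (E : ℂ))) atTop
        (𝓝 ((((μ {E}).toReal)⁻¹ : ℝ) : ℂ))) ∧
    -- (iii) divergence of the Julia–Carathéodory derivative of ω_t at E ∈ ℝ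
    (∀ E : ℝ, ∀ g : ℂ → ℂ, AnalyticAt ℂ g (ω (E : ℂ)) →
      (∀ z ∈ UHP, g z = nrT μ z) →
      ((∀ zs : ℕ → ℂ, NonTangentialSeq zs E →
          Tendsto (fun n => ‖(ω (zs n) - ω (E : ℂ)) / (zs n - (E : ℂ))‖)
            atTop atTop)
        ↔ deriv g (ω (E : ℂ)) = ((t / (t - 1) : ℝ) : ℂ))) := by
  haveI := hμ.prob
  refine ⟨?_, fun E hE zs hzs => part_two E hE zs hzs,
    fun E g hg hgU => part_three ht hω E g hg hgU⟩
  intro w hw hne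
  obtain ⟨z₀, hz₀, hwz⟩ := hw
  by_cases him : 0 < w.im
  · refine ⟨w.im/2, by linarith, nrT μ, fun u hu => ?_, fun u _ => rfl⟩
    rw [Metric.mem_ball] at hu
    have huim : 0 < u.im := by
      have h1 : |u.im - w.im| ≤ dist u w := by
        rw [dist_eq_norm]
        have h2 := Complex.abs_im_le_norm (u - w)
        simpa [Complex.sub_im] using h2
      have h3 := abs_lt.mp (lt_of_le_of_lt h1 hu)
      linarith [h3.1]
    have := ((stT_analyticAt_uhp (μ := μ) huim).inv (stT_ne_zero huim)).neg
    exact this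
  · -- boundary
    have hz₀im : z₀.im = 0 := by
      have hz0' : (0:ℝ) ≤ z₀.im := hz₀
      rcases lt_or_eq_of_le hz0' with h | h
      · exfalso
        apply him
        have h3 : ω z₀ ∈ UHP := hω.maps z₀ h
        rw [hwz] at h3
        exact h3
      · exact h.symm
    set E := z₀.re with hE
    have hz₀eq : z₀ = (E:ℂ) := by
      apply Complex.ext <;> simp [hE, hz₀im]
    have hωE : ω (E:ℂ) = w := by rw [← hz₀eq]; exact hwz
    have hwim : w.im = 0 := by
      apply le_antisymm (not_lt.mp him)
      have h1 : Tendsto (fun n => (ω (zseq E n)).im) atTop (𝓝 w.im) := by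
        have h2 := tendsto_omega_of_seq hω E (zseq_mem E) (zseq_tendsto E)
        rw [hωE] at h2
        exact (Complex.continuous_im.tendsto w).comp h2
      exact ge_of_tendsto h1 (Filter.Eventually.of_forall fun n =>
        (hω.maps _ (zseq_mem E n) : 0 < (ω (zseq E n)).im).le)
    set W := w.re with hW
    have hwW : w = ((W:ℝ):ℂ) := by
      apply Complex.ext <;> simp [hW, hwim]
    by_cases hμW : μ {W} = 0
    · by_cases hWs : W ∈ msupp (acPart μ)
      · exact (no_real_in_suppac hμ ht hω (hωE.trans hwW) hμW hWs).elim
      · -- off support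
        have hatomne : ∀ j, atom j ≠ W := fun j hj =>
          absurd (hμ.atom_pos j) (by rw [hj, hμW]; exact lt_irrefl 0)
        obtain ⟨ε₁, hε₁, hnull₁⟩ := not_msupp_iff.mp hWs
        obtain ⟨ε₂, hε₂, havoid⟩ := atoms_away atom hμ.npp_pos W
        set ε := min ε₁ ε₂ with hεdef
        have hεpos : 0 < ε := lt_min hε₁ hε₂
        have hεle1 : ε ≤ ε₁ := min_le_left _ _
        have hεle2 : ε ≤ ε₂ := min_le_right _ _
        have hnull : μ (Set.Ioo (W-ε) (W+ε)) = 0 := by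
          rw [mu_apply_decomp]
          have hs0 : μ.singularPart volume (Set.Ioo (W-ε) (W+ε)) = 0 := by
            apply sing_null hμ measurableSet_Ioo
            intro j hj
            apply (havoid j).resolve_left (hatomne j)
            exact Set.Ioo_subset_Ioo (by linarith) (by linarith) hj
          have ha0 : acPart μ (Set.Ioo (W-ε) (W+ε)) = 0 := by
            apply measure_mono_null (Set.Ioo_subset_Ioo (by linarith) (by linarith)) hnull₁
          rw [hs0, ha0, add_zero]
        have hcont : ContinuousAt (stT μ) ((W:ℝ):ℂ) :=
          (stT_analyticAt_near hεpos hnull (by rw [dist_self]; linarith)).continuousAt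
        have hst_ne := stT_limit_ne ht hω (hωE.trans hwW) hcont
        rw [hwW]
        exact offsupp_result hεpos hnull hst_ne
    · -- atom
      have hWs : W ∉ msupp (acPart μ) := by
        rcases (by tauto : μ {W} = 0 ∨ ¬(μ {W} ≠ 0 ∧ W ∈ msupp (acPart μ))) with h | h
        · exact absurd h hμW
        · intro h2
          exact h ⟨hμW, h2⟩
      obtain ⟨ε₁, hε₁, hnull₁⟩ := not_msupp_iff.mp hWs
      obtain ⟨ε₂, hε₂, havoid⟩ := atoms_away atom hμ.npp_pos W
      set ε := min ε₁ ε₂ with hεdef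
      have hεpos : 0 < ε := lt_min hε₁ hε₂
      have hεle1 : ε ≤ ε₁ := min_le_left _ _
      have hεle2 : ε ≤ ε₂ := min_le_right _ _
      have hnull : μ (Set.Ioo (W-ε) (W+ε) \ {W}) = 0 := by
        rw [mu_apply_decomp]
        have hs0 : μ.singularPart volume (Set.Ioo (W-ε) (W+ε) \ {W}) = 0 := by
          apply sing_null hμ (measurableSet_Ioo.diff (measurableSet_singleton W))
          intro j hj
          rcases havoid j with h | h
          · exact hj.2 (by rw [h]; exact rfl)
          · exact h (Set.Ioo_subset_Ioo (by linarith) (by linarith) hj.1)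
        have ha0 : acPart μ (Set.Ioo (W-ε) (W+ε) \ {W}) = 0 := by
          apply measure_mono_null
            (Set.diff_subset.trans (Set.Ioo_subset_Ioo (by linarith) (by linarith)))
            hnull₁
        rw [hs0, ha0, add_zero]
      rw [hwW]
      exact atom_result hεpos hμW hnull
end AuxFinal
end
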